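/- arXiv:1407.1662 — 5 statements merged into one kernel-verified Lean document; each statement's English description precedes it below -/
import Mathlib

section
/- Let q ≥ 1 and let a = (k₁/q', (k₂−k₁)/q', …, (k_q−k_{q−1})/q') be a probability distribution on [q] with rational entries, where q' is a positive integer and 0 ≤ k₁ ≤ k₂ ≤ ⋯ ≤ k_q = q' are integers with all entries of a positive. Then for every symmetric q×q real matrix J there exists a symmetric q'×q' real matrix J' (obtained by blowing up row/column i of J into k_i − k_{i−1} copies) such that for every graphon W, the microcanonical ground state energy satisfies E_a(W,J) = E_b(W,J'), where b = (1/q', …, 1/q') is the uniform distribution on [q']. -/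
open MeasureTheory Filter

noncomputable section

/-- The unit interval as a subset of ℝ. -/
def I01 : Set ℝ := Set.Icc 0 1

/-- A `q`-fractional partition: measurable functions `ρ i : [0,1] → [0,1]`
summing pointwise to `1` on `[0,1]`. -/
structure FracPartition (q : ℕ) where
  toFun : Fin q → ℝ → ℝ
  measurable : ∀ i, Measurable (toFun i)
  mem_I01 : ∀ i x, x ∈ I01 → toFun i x ∈ I01
  sum_one : ∀ x ∈ I01, ∑ i, toFun i x = 1

/-- Energy of a fractional partition with respect to a graphon `W` and matrix `J`. -/
def energy {q : ℕ} (W : ℝ → ℝ → ℝ) (J : Matrix (Fin q) (Fin q) ℝ)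
    (ρ : FracPartition q) : ℝ :=
  - ∑ i, ∑ j, J i j * ∫ x in I01, ∫ y in I01, ρ.toFun i x * ρ.toFun j y * W x y

/-- `a` is a probability distribution on `Fin q`. -/
def IsDist {q : ℕ} (a : Fin q → ℝ) : Prop :=
  (∀ i, 0 ≤ a i) ∧ ∑ i, a i = 1

/-- Microcanonical ground state energy. -/
def mgse {q : ℕ} (W : ℝ → ℝ → ℝ) (J : Matrix (Fin q) (Fin q) ℝ) (a : Fin q → ℝ) : ℝ :=
  sInf {e | ∃ ρ : FracPartition q, (∀ i, (∫ x in I01, ρ.toFun i x) = a i) ∧ e = energy W J ρ}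

/-- General lower threshold ground state energy with threshold vector `x`. -/
def ltgseV {q : ℕ} (W : ℝ → ℝ → ℝ) (J : Matrix (Fin q) (Fin q) ℝ) (x : Fin q → ℝ) : ℝ :=
  sInf {e | ∃ a : Fin q → ℝ, IsDist a ∧ (∀ i, x i ≤ a i) ∧ e = mgse W J a}

/-- Homogeneous lower threshold ground state energy with scalar threshold `c`. -/
def ltgse {q : ℕ} (W : ℝ → ℝ → ℝ) (J : Matrix (Fin q) (Fin q) ℝ) (c : ℝ) : ℝ :=
  ltgseV W J (fun _ => c)

/-- Unrestricted ground state energy. -/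
def gse {q : ℕ} (W : ℝ → ℝ → ℝ) (J : Matrix (Fin q) (Fin q) ℝ) : ℝ :=
  sInf {e | ∃ ρ : FracPartition q, e = energy W J ρ}

/-- `W` is a graphon: a bounded symmetric measurable function. -/
def IsGraphon (W : ℝ → ℝ → ℝ) : Prop :=
  Measurable (Function.uncurry W) ∧ (∀ x y, W x y = W y x) ∧ ∃ M, ∀ x y, |W x y| ≤ M

lemma measI01 : MeasurableSet I01 := measurableSet_Icc

lemma volI01 : MeasureTheory.volume I01 = 1 := by simp [I01]

lemma integrableOn_of_bounded {φ : ℝ → ℝ} {C : ℝ} (hφ : Measurable φ)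
    (hb : ∀ x ∈ I01, |φ x| ≤ C) : IntegrableOn φ I01 := by
  refine Integrable.mono' (g := fun _ => C) ?_ hφ.aestronglyMeasurable ?_
  · exact integrableOn_const (by simp [volI01])
  · exact (ae_restrict_iff' measI01).mpr (ae_of_all _ fun x hx => by simpa using hb x hx)

lemma measW_left {W : ℝ → ℝ → ℝ} (hW : Measurable (Function.uncurry W)) (x : ℝ) :
    Measurable fun y => W x y := hW.comp measurable_prodMk_left

lemma measurable_innerInt {W : ℝ → ℝ → ℝ} (hW : Measurable (Function.uncurry W))
    {g : ℝ → ℝ} (hg : Measurable g) :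
    Measurable fun x => ∫ y in I01, g y * W x y := by
  have hsm : StronglyMeasurable (Function.uncurry fun x y => g y * W x y) :=
    ((hg.comp measurable_snd).mul hW).stronglyMeasurable
  exact hsm.integral_prod_right.measurable

lemma abs_innerInt_le {W : ℝ → ℝ → ℝ} {M : ℝ} (hWm : Measurable (Function.uncurry W)) (hM : ∀ x y, |W x y| ≤ M)
    {g : ℝ → ℝ} (hg : Measurable g) (hg1 : ∀ y ∈ I01, |g y| ≤ 1) (x : ℝ) :
    |∫ y in I01, g y * W x y| ≤ M := by
  have h := MeasureTheory.norm_setIntegral_le_of_norm_le_const (μ := volume)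
      (s := I01) (f := fun y => g y * W x y) (C := M) (by simp [volI01]) ?_
  · simpa [Measure.real, volI01] using h
  · intro y hy
    have := hg1 y hy
    calc ‖g y * W x y‖ = |g y| * |W x y| := abs_mul _ _
      _ ≤ 1 * M := mul_le_mul this (hM x y) (abs_nonneg _) zero_le_one
      _ = M := one_mul M

lemma double_sum {W : ℝ → ℝ → ℝ} (hWm : Measurable (Function.uncurry W))
    {M : ℝ} (hM : ∀ x y, |W x y| ≤ M)
    {ι κ : Type*} (s : Finset ι) (t : Finset κ)
    (f : ι → ℝ → ℝ) (g : κ → ℝ → ℝ)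
    (hf : ∀ u, Measurable (f u)) (hg : ∀ v, Measurable (g v))
    (hfb : ∀ u, ∀ x ∈ I01, |f u x| ≤ 1) (hgb : ∀ v, ∀ y ∈ I01, |g v y| ≤ 1) :
    (∫ x in I01, ∫ y in I01, (∑ u ∈ s, f u x) * (∑ v ∈ t, g v y) * W x y)
      = ∑ u ∈ s, ∑ v ∈ t, ∫ x in I01, ∫ y in I01, f u x * g v y * W x y := by
  set h : κ → ℝ → ℝ := fun v x => ∫ y in I01, g v y * W x y with hh
  have hWb : ∀ (x : ℝ), ∀ v, ∀ y ∈ I01, |g v y * W x y| ≤ M := by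
    intro x v y hy
    calc |g v y * W x y| = |g v y| * |W x y| := abs_mul _ _
      _ ≤ 1 * M := mul_le_mul (hgb v y hy) (hM x y) (abs_nonneg _) zero_le_one
      _ = M := one_mul M
  have hgint : ∀ (x : ℝ) (v : κ), IntegrableOn (fun y => g v y * W x y) I01 :=
    fun x v => integrableOn_of_bounded ((hg v).mul (measW_left hWm x)) (hWb x v)
  have step1 : ∀ x : ℝ, (∫ y in I01, (∑ u ∈ s, f u x) * (∑ v ∈ t, g v y) * W x y)
      = ∑ v ∈ t, ∑ u ∈ s, f u x * h v x := by
    intro x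
    have e1 : (fun y => (∑ u ∈ s, f u x) * (∑ v ∈ t, g v y) * W x y)
        = fun y => ∑ v ∈ t, (∑ u ∈ s, f u x) * (g v y * W x y) := by
      funext y
      rw [mul_assoc, show (∑ v ∈ t, g v y) * W x y = ∑ v ∈ t, g v y * W x y from
        Finset.sum_mul _ _ _, Finset.mul_sum]
    rw [e1, MeasureTheory.integral_finset_sum]
    · refine Finset.sum_congr rfl fun v _ => ?_
      rw [MeasureTheory.integral_const_mul, Finset.sum_mul]
    · intro v _
      exact ((hgint x v).const_mul _)
  have e2 : (∫ x in I01, ∫ y in I01, (∑ u ∈ s, f u x) * (∑ v ∈ t, g v y) * W x y)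
      = ∫ x in I01, ∑ v ∈ t, ∑ u ∈ s, f u x * h v x := by
    exact MeasureTheory.integral_congr_ae (Filter.Eventually.of_forall step1)
  rw [e2, MeasureTheory.integral_finset_sum, Finset.sum_comm (s := s) (t := t)]
  · refine Finset.sum_congr rfl fun v _ => ?_
    rw [MeasureTheory.integral_finset_sum]
    · refine Finset.sum_congr rfl fun u _ => ?_
      have e3 : ∀ x : ℝ, (∫ y in I01, f u x * g v y * W x y) = f u x * h v x := by
        intro x
        have : (fun y => f u x * g v y * W x y) = fun y => f u x * (g v y * W x y) := by
          funext y; rw [mul_assoc]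
        rw [this, MeasureTheory.integral_const_mul]
      rw [MeasureTheory.integral_congr_ae (Filter.Eventually.of_forall e3)]
    · intro u _
      refine integrableOn_of_bounded (C := M) ((hf u).mul (measurable_innerInt hWm (hg v))) ?_
      intro x hx
      calc |f u x * h v x| = |f u x| * |h v x| := abs_mul _ _
        _ ≤ 1 * M := mul_le_mul (hfb u x hx) (abs_innerInt_le hWm hM (hg v) (hgb v) x)
              (abs_nonneg _) zero_le_one
        _ = M := one_mul M
  · intro v _
    refine integrableOn_of_bounded ?_ (C := (s.card : ℝ) * M) ?_
    · exact Finset.measurable_sum s fun u _ => (hf u).mul (measurable_innerInt hWm (hg v))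
    · intro x hx
      calc |∑ u ∈ s, f u x * h v x| ≤ ∑ u ∈ s, |f u x * h v x| :=
            Finset.abs_sum_le_sum_abs _ _
        _ ≤ ∑ u ∈ s, M := by
            refine Finset.sum_le_sum fun u _ => ?_
            calc |f u x * h v x| = |f u x| * |h v x| := abs_mul _ _
              _ ≤ 1 * M := mul_le_mul (hfb u x hx) (abs_innerInt_le hWm hM (hg v) (hgb v) x)
                    (abs_nonneg _) zero_le_one
              _ = M := one_mul M
        _ = (s.card : ℝ) * M := by rw [Finset.sum_const, nsmul_eq_mul]

lemma sum_block {M : Type*} [AddCommMonoid M] {q' : ℕ} {A B : ℕ} (hB : B ≤ q')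
    (F : ℕ → M) :
    ∑ u ∈ Finset.univ.filter (fun u : Fin q' => A ≤ (u:ℕ) ∧ (u:ℕ) < B), F ((u:ℕ) - A)
      = ∑ r ∈ Finset.range (B - A), F r := by
  refine Finset.sum_bij' (fun u _ => (u:ℕ) - A)
    (fun r hr => (⟨A + r, by simp only [Finset.mem_range] at hr; omega⟩ : Fin q'))
    ?_ ?_ ?_ ?_ ?_
  · intro u hu
    simp only [Finset.mem_filter, Finset.mem_univ, true_and] at hu
    simp only [Finset.mem_range]; omega
  · intro r hr
    simp only [Finset.mem_range] at hr
    simp only [Finset.mem_filter, Finset.mem_univ, true_and]; omega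
  · intro u hu
    simp only [Finset.mem_filter, Finset.mem_univ, true_and] at hu
    apply Fin.ext; simp; omega
  · intro r hr
    simp only [Finset.mem_range] at hr
    simp
  · intro u hu; rfl

lemma card_block {q' : ℕ} {A B : ℕ} (hB : B ≤ q') :
    (Finset.univ.filter (fun u : Fin q' => A ≤ (u:ℕ) ∧ (u:ℕ) < B)).card = B - A := by
  rw [Finset.card_eq_sum_ones]
  have := sum_block (M := ℕ) hB (fun _ => 1) (A := A)
  rw [this, Finset.sum_const, Finset.card_range, smul_eq_mul, mul_one]

lemma indicator_partition (t : ℕ → ℝ) (hmono : ∀ r, t r ≤ t (r+1)) (m : ℕ) (hm : 0 < m) (x : ℝ) :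
    ∑ r ∈ Finset.range m,
        Set.indicator (if r = 0 then Set.Iic (t 1) else Set.Ioc (t r) (t (r+1))) (fun _ => (1:ℝ)) x
      = Set.indicator (Set.Iic (t m)) (fun _ => (1:ℝ)) x := by
  induction m with
  | zero => omega
  | succ n ih =>
    rcases Nat.eq_zero_or_pos n with h|h
    · subst h; simp
    · rw [Finset.sum_range_succ, ih h]
      have hn : n ≠ 0 := by omega
      rw [if_neg hn]
      have hmn : t n ≤ t (n+1) := hmono n
      simp only [Set.indicator_apply, Set.mem_Iic, Set.mem_Ioc]
      rcases le_or_gt x (t n) with h1|h1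
      · rw [if_pos h1, if_neg (by intro hc; linarith [hc.1]), if_pos (h1.trans hmn)]; ring
      · rcases le_or_gt x (t (n+1)) with h2|h2
        · rw [if_neg (by linarith), if_pos ⟨h1, h2⟩, if_pos h2]; ring
        · rw [if_neg (by linarith), if_neg (by intro hc; linarith [hc.2]),
            if_neg (by linarith)]; ring

lemma split_exists (ρ : ℝ → ℝ) (hmeas : Measurable ρ) (hmem : ∀ x ∈ I01, ρ x ∈ I01)
    (m q' : ℕ) (hq' : 0 < q') (hm : 0 < m) (hint : (∫ x in I01, ρ x) = (m : ℝ) / q') :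
    ∃ S : ℕ → Set ℝ, (∀ r, MeasurableSet (S r)) ∧
      (∀ x ∈ I01, ∑ r ∈ Finset.range m, Set.indicator (S r) (fun _ => (1:ℝ)) x = 1) ∧
      (∀ r < m, (∫ x in I01 ∩ S r, ρ x) = (q' : ℝ)⁻¹) := by
  set f : ℝ → ℝ := Set.indicator I01 ρ with hf
  have hfmeas : Measurable f := hmeas.indicator measI01
  have hf0 : ∀ x, 0 ≤ f x := by
    intro x
    by_cases h : x ∈ I01
    · rw [hf, Set.indicator_of_mem h]; exact (hmem x h).1
    · rw [hf, Set.indicator_of_notMem h]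
  have hfint : Integrable f volume := by
    rw [hf, MeasureTheory.integrable_indicator_iff measI01]
    exact integrableOn_of_bounded hmeas fun x hx => by
      rw [abs_of_nonneg (hmem x hx).1]; exact (hmem x hx).2
  set g : ℝ → ℝ := fun b => ∫ x in (0:ℝ)..b, f x with hg
  have hgcont : Continuous g :=
    intervalIntegral.continuous_primitive (fun a b => hfint.intervalIntegrable) 0
  have hgmono : Monotone g := by
    intro s u hsu
    have hadd := intervalIntegral.integral_add_adjacent_intervals
      (a := 0) (b := s) (c := u) (f := f) (μ := volume)
      hfint.intervalIntegrable hfint.intervalIntegrable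
    have hnn : 0 ≤ ∫ x in s..u, f x :=
      intervalIntegral.integral_nonneg hsu fun x _ => hf0 x
    rw [hg]; dsimp only; linarith
  have hg0 : g 0 = 0 := intervalIntegral.integral_same
  have hSf : ∀ S : Set ℝ, MeasurableSet S → (∫ x in I01 ∩ S, ρ x) = ∫ x in S, f x := by
    intro S hS
    rw [hf, MeasureTheory.integral_indicator measI01,
      MeasureTheory.Measure.restrict_restrict measI01]
  have hIoc : ∀ s u : ℝ, s ≤ u → (∫ x in Set.Ioc s u, f x) = g u - g s := by
    intro s u hsu
    have h2 := intervalIntegral.integral_interval_sub_left (a := (0:ℝ)) (b := u) (c := s)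
      (f := f) (μ := volume) hfint.intervalIntegrable hfint.intervalIntegrable
    rw [intervalIntegral.integral_of_le hsu] at h2
    exact h2.symm
  have hIic : ∀ b : ℝ, 0 ≤ b → (∫ x in Set.Iic b, f x) = g b := by
    intro b hb
    have hsplit : Set.Iic b = Set.Iio 0 ∪ Set.Icc 0 b := by
      ext x
      simp only [Set.mem_Iic, Set.mem_union, Set.mem_Iio, Set.mem_Icc]
      constructor
      · intro hx
        rcases lt_or_ge x 0 with h|h
        · exact Or.inl h
        · exact Or.inr ⟨h, hx⟩
      · rintro (h|⟨h1, h2⟩) <;> linarith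
    have hdisj : Disjoint (Set.Iio (0:ℝ)) (Set.Icc 0 b) := by
      rw [Set.disjoint_left]
      rintro x hx ⟨h1, h2⟩
      exact absurd h1 (not_le.2 hx)
    rw [hsplit, MeasureTheory.setIntegral_union hdisj measurableSet_Icc
      hfint.integrableOn hfint.integrableOn]
    have hzero : (∫ x in Set.Iio (0:ℝ), f x) = 0 := by
      rw [MeasureTheory.setIntegral_congr_fun (g := fun _ => (0:ℝ)) measurableSet_Iio ?_]
      · simp
      · intro x hx
        rw [hf]
        apply Set.indicator_of_notMem
        intro hc
        exact absurd hc.1 (not_le.2 hx)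
    rw [hzero, MeasureTheory.integral_Icc_eq_integral_Ioc, hIoc 0 b hb, hg0]
    ring
  have hg1 : g 1 = (m : ℝ) / q' := by
    have h1 : (∫ x in Set.Ioc (0:ℝ) 1, f x) = g 1 - g 0 := hIoc 0 1 zero_le_one
    have h2 : I01 ∩ Set.Ioc (0:ℝ) 1 = Set.Ioc (0:ℝ) 1 := by
      apply Set.inter_eq_self_of_subset_right
      exact Set.Ioc_subset_Icc_self
    have h3 := hSf (Set.Ioc (0:ℝ) 1) measurableSet_Ioc
    rw [h2] at h3
    have h4 : (∫ x in I01, ρ x) = ∫ x in Set.Ioc (0:ℝ) 1, ρ x := by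
      rw [show I01 = Set.Icc (0:ℝ) 1 from rfl, MeasureTheory.integral_Icc_eq_integral_Ioc]
    rw [hg0, sub_zero] at h1
    rw [← h1, ← h3, ← h4, hint]
  -- thresholds
  have hex : ∀ r : ℕ, ∃ τ, τ ∈ Set.Icc (0:ℝ) 1 ∧ g τ = ((min r m : ℕ) : ℝ) / q' ∧
      (m ≤ r → τ = 1) := by
    intro r
    rcases le_or_gt m r with h|h
    · refine ⟨1, Set.mem_Icc.mpr ⟨zero_le_one, le_refl 1⟩, ?_, fun _ => rfl⟩
      rw [min_eq_right h, hg1]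
    · have hval : ((min r m : ℕ) : ℝ) / q' ∈ Set.Icc (g 0) (g 1) := by
        rw [hg0, hg1, min_eq_left h.le]
        constructor
        · positivity
        · have hq'pos : (0:ℝ) < q' := by exact_mod_cast hq'
          gcongr
      obtain ⟨τ, hτ1, hτ2⟩ := intermediate_value_Icc zero_le_one hgcont.continuousOn hval
      exact ⟨τ, hτ1, hτ2, fun hc => absurd hc (not_le.2 h)⟩
  choose t ht1 ht2 ht3 using hex
  have htmono : ∀ r, t r ≤ t (r+1) := by
    intro r
    rcases le_or_gt m (r+1) with h|h
    · rw [ht3 (r+1) h]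
      exact (Set.mem_Icc.mp (ht1 r)).2
    · by_contra hc
      push_neg at hc
      have := hgmono hc.le
      rw [ht2, ht2] at this
      have h2 : ((min (r+1) m : ℕ) : ℝ) ≤ ((min r m : ℕ) : ℝ) := by
        have hq'pos : (0:ℝ) < q' := by exact_mod_cast hq'
        rwa [div_le_div_iff_of_pos_right hq'pos] at this
      have h3 : min (r+1) m ≤ min r m := by exact_mod_cast h2
      omega
  refine ⟨fun r => if r = 0 then Set.Iic (t 1) else Set.Ioc (t r) (t (r+1)), ?_, ?_, ?_⟩
  · intro r
    dsimp only
    split_ifs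
    · exact measurableSet_Iic
    · exact measurableSet_Ioc
  · intro x hx
    rw [indicator_partition t htmono m hm x, Set.indicator_of_mem]
    rw [Set.mem_Iic, ht3 m (le_refl m)]
    exact hx.2
  · intro r hr
    dsimp only
    rcases Nat.eq_zero_or_pos r with h0|h0
    · subst h0
      rw [if_pos rfl, hSf _ measurableSet_Iic,
        hIic (t 1) (Set.mem_Icc.mp (ht1 1)).1, ht2,
        min_eq_left (by omega : 1 ≤ m)]
      simp
    · rw [if_neg (by omega), hSf _ measurableSet_Ioc, hIoc _ _ (htmono r), ht2, ht2,
        min_eq_left (by omega : r + 1 ≤ m), min_eq_left (by omega : r ≤ m)]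
      push_cast
      field_simp
      ring

lemma exists_block {q q' : ℕ} (hq' : 0 < q') (k : Fin (q+1) → ℕ) (hk0 : k 0 = 0)
    (hklast : k (Fin.last q) = q') (u : Fin q') :
    ∃ i : Fin q, k i.castSucc ≤ (u:ℕ) ∧ (u:ℕ) < k i.succ := by
  have main : ∀ n : ℕ, ∀ hn : n < q + 1, (u:ℕ) < k ⟨n, hn⟩ →
      ∃ i : Fin q, k i.castSucc ≤ (u:ℕ) ∧ (u:ℕ) < k i.succ := by
    intro n
    induction n with
    | zero =>
      intro hn h
      rw [show (⟨0, hn⟩ : Fin (q+1)) = 0 from rfl, hk0] at h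
      omega
    | succ p ih =>
      intro hn h
      have hpq : p < q := by omega
      rcases le_or_gt (k ⟨p, by omega⟩) (u:ℕ) with hle|hlt
      · refine ⟨⟨p, hpq⟩, ?_, ?_⟩
        · rwa [Fin.castSucc_mk]
        · rwa [Fin.succ_mk]
      · exact ih (by omega) hlt
  have hlast : (u:ℕ) < k ⟨q, by omega⟩ := by
    rw [show (⟨q, by omega⟩ : Fin (q+1)) = Fin.last q from rfl, hklast]
    exact u.isLt
  exact main q (by omega) hlast

lemma block_unique {q : ℕ} {k : Fin (q+1) → ℕ} (hkmono : Monotone k) {u : ℕ} {i j : Fin q}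
    (hi1 : k i.castSucc ≤ u) (hi2 : u < k i.succ) (hj1 : k j.castSucc ≤ u)
    (hj2 : u < k j.succ) : i = j := by
  by_contra hne
  rcases lt_or_gt_of_ne hne with h|h
  · have : k i.succ ≤ k j.castSucc := by
      apply hkmono
      simp only [Fin.le_def, Fin.val_succ, Fin.coe_castSucc]
      exact h
    omega
  · have : k j.succ ≤ k i.castSucc := by
      apply hkmono
      simp only [Fin.le_def, Fin.val_succ, Fin.coe_castSucc]
      exact h
    omega

theorem stmt0 (q q' : ℕ) (hq : 1 ≤ q) (hq' : 0 < q')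
    (k : Fin (q + 1) → ℕ) (hk0 : k 0 = 0) (hklast : k (Fin.last q) = q')
    (hkmono : Monotone k)
    (a : Fin q → ℝ) (ha : ∀ i, a i = ((k i.succ : ℝ) - (k i.castSucc : ℝ)) / q')
    (hapos : ∀ i, 0 < a i)
    (J : Matrix (Fin q) (Fin q) ℝ) (hJ : J.IsSymm) :
    ∃ J' : Matrix (Fin q') (Fin q') ℝ, J'.IsSymm ∧
      (∀ (u v : Fin q') (i j : Fin q),
        k i.castSucc ≤ (u : ℕ) → (u : ℕ) < k i.succ →
        k j.castSucc ≤ (v : ℕ) → (v : ℕ) < k j.succ → J' u v = J i j) ∧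
      ∀ W : ℝ → ℝ → ℝ, IsGraphon W →
        mgse W J a = mgse W J' (fun _ => (q' : ℝ)⁻¹) := by
  have hexi := fun u : Fin q' => exists_block hq' k hk0 hklast u
  choose idx hidx1 hidx2 using hexi
  have hidxu : ∀ (u : Fin q') (i : Fin q), k i.castSucc ≤ (u:ℕ) → (u:ℕ) < k i.succ →
      idx u = i :=
    fun u i h1 h2 => block_unique hkmono (hidx1 u) (hidx2 u) h1 h2
  have hq'pos : (0:ℝ) < q' := by exact_mod_cast hq'
  have hkk : ∀ i : Fin q, k i.castSucc < k i.succ := by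
    intro i
    have h := hapos i
    rw [ha i] at h
    rcases div_pos_iff.mp h with ⟨h1, _⟩ | ⟨_, h2⟩
    · have : (k i.castSucc : ℝ) < k i.succ := by linarith
      exact_mod_cast this
    · linarith
  have hk_le : ∀ i : Fin q, k i.succ ≤ q' := by
    intro i
    rw [← hklast]
    exact hkmono (Fin.le_last _)
  refine ⟨Matrix.of (fun u v => J (idx u) (idx v)), ?_, ?_, ?_⟩
  · ext u v
    simp only [Matrix.transpose_apply, Matrix.of_apply]
    exact hJ.apply (idx u) (idx v)
  · intro u v i j h1 h2 h3 h4
    simp only [Matrix.of_apply, hidxu u i h1 h2, hidxu v j h3 h4]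
  · intro W hW
    obtain ⟨hWm, hWsym, M, hM⟩ := hW
    set fib : Fin q → Finset (Fin q') :=
      fun i => Finset.univ.filter (fun u => idx u = i) with hfib
    have hfib_mem : ∀ {u : Fin q'} {i : Fin q}, u ∈ fib i → idx u = i := by
      intro u i hu
      simpa [hfib] using hu
    have hfib_eq : ∀ i, fib i
        = Finset.univ.filter (fun u : Fin q' => k i.castSucc ≤ (u:ℕ) ∧ (u:ℕ) < k i.succ) := by
      intro i
      ext u
      simp only [hfib, Finset.mem_filter, Finset.mem_univ, true_and]
      constructor
      · rintro rfl
        exact ⟨hidx1 u, hidx2 u⟩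
      · rintro ⟨h1, h2⟩
        exact hidxu u i h1 h2
    have hcard : ∀ i, (fib i).card = k i.succ - k i.castSucc := by
      intro i
      rw [hfib_eq i]
      exact card_block (hk_le i)
    have hbnd : ∀ (σ : FracPartition q') (u : Fin q'), ∀ x ∈ I01, |σ.toFun u x| ≤ 1 := by
      intro σ u x hx
      have h := σ.mem_I01 u x hx
      rw [abs_of_nonneg h.1]
      exact h.2
    have hbndq : ∀ (σ : FracPartition q) (i : Fin q), ∀ x ∈ I01, |σ.toFun i x| ≤ 1 := by
      intro σ i x hx
      have h := σ.mem_I01 i x hx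
      rw [abs_of_nonneg h.1]
      exact h.2
    -- key energy identity
    have energy_eq : ∀ (ρ : FracPartition q) (ρ' : FracPartition q'),
        (∀ i, ∀ x ∈ I01, ρ.toFun i x = ∑ u ∈ fib i, ρ'.toFun u x) →
        energy W J ρ = energy W (Matrix.of fun u v => J (idx u) (idx v)) ρ' := by
      intro ρ ρ' hagree
      unfold energy
      rw [neg_inj]
      have hTgroup : ∀ i j : Fin q,
          (∑ u ∈ fib i, ∑ v ∈ fib j,
            ∫ x in I01, ∫ y in I01, ρ'.toFun u x * ρ'.toFun v y * W x y)
          = ∫ x in I01, ∫ y in I01, ρ.toFun i x * ρ.toFun j y * W x y := by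
        intro i j
        rw [← double_sum hWm hM (fib i) (fib j) _ _ (fun u => ρ'.measurable u)
          (fun v => ρ'.measurable v) (fun u x hx => hbnd ρ' u x hx)
          (fun v y hy => hbnd ρ' v y hy)]
        refine MeasureTheory.setIntegral_congr_fun measI01 fun x hx => ?_
        refine MeasureTheory.setIntegral_congr_fun measI01 fun y hy => ?_
        rw [← hagree i x hx, ← hagree j y hy]
      calc ∑ i, ∑ j, J i j * ∫ x in I01, ∫ y in I01, ρ.toFun i x * ρ.toFun j y * W x y
          = ∑ i, ∑ j, ∑ u ∈ fib i, ∑ v ∈ fib j, J i j *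
              ∫ x in I01, ∫ y in I01, ρ'.toFun u x * ρ'.toFun v y * W x y := by
            refine Finset.sum_congr rfl fun i _ => Finset.sum_congr rfl fun j _ => ?_
            rw [← hTgroup i j, Finset.mul_sum]
            exact Finset.sum_congr rfl fun u _ => Finset.mul_sum _ _ _
        _ = ∑ i, ∑ u ∈ fib i, ∑ j, ∑ v ∈ fib j, J i j *
              ∫ x in I01, ∫ y in I01, ρ'.toFun u x * ρ'.toFun v y * W x y := by
            exact Finset.sum_congr rfl fun i _ => Finset.sum_comm
        _ = ∑ i, ∑ u ∈ fib i, ∑ j, ∑ v ∈ fib j,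
              (Matrix.of fun u v => J (idx u) (idx v)) u v *
              ∫ x in I01, ∫ y in I01, ρ'.toFun u x * ρ'.toFun v y * W x y := by
            refine Finset.sum_congr rfl fun i _ => Finset.sum_congr rfl fun u hu =>
              Finset.sum_congr rfl fun j _ => Finset.sum_congr rfl fun v hv => ?_
            rw [Matrix.of_apply, hfib_mem hu, hfib_mem hv]
        _ = ∑ i, ∑ u ∈ fib i, ∑ v,
              (Matrix.of fun u v => J (idx u) (idx v)) u v *
              ∫ x in I01, ∫ y in I01, ρ'.toFun u x * ρ'.toFun v y * W x y := by
            refine Finset.sum_congr rfl fun i _ => Finset.sum_congr rfl fun u _ => ?_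
            exact Finset.sum_fiberwise Finset.univ idx _
        _ = ∑ u, ∑ v,
              (Matrix.of fun u v => J (idx u) (idx v)) u v *
              ∫ x in I01, ∫ y in I01, ρ'.toFun u x * ρ'.toFun v y * W x y := by
            exact Finset.sum_fiberwise Finset.univ idx _
    -- set equality
    unfold mgse
    congr 1
    ext e
    simp only [Set.mem_setOf_eq]
    constructor
    · -- split direction
      rintro ⟨ρ, hρint, rfl⟩
      have hintm : ∀ i : Fin q,
          (∫ x in I01, ρ.toFun i x) = ((k i.succ - k i.castSucc : ℕ) : ℝ) / q' := by
        intro i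
        rw [hρint i, ha i, Nat.cast_sub (hkk i).le]
      have hsp : ∀ i : Fin q, ∃ S : ℕ → Set ℝ, (∀ r, MeasurableSet (S r)) ∧
          (∀ x ∈ I01, ∑ r ∈ Finset.range (k i.succ - k i.castSucc),
            Set.indicator (S r) (fun _ => (1:ℝ)) x = 1) ∧
          (∀ r < k i.succ - k i.castSucc, (∫ x in I01 ∩ S r, ρ.toFun i x) = (q' : ℝ)⁻¹) :=
        fun i => split_exists (ρ.toFun i) (ρ.measurable i) (ρ.mem_I01 i)
          (k i.succ - k i.castSucc) q' hq' (by have := hkk i; omega) (hintm i)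
      choose S hS1 hS2 hS3 using hsp
      set ρf : Fin q' → ℝ → ℝ := fun u x =>
        ρ.toFun (idx u) x * Set.indicator (S (idx u) ((u:ℕ) - k (idx u).castSucc))
          (fun _ => (1:ℝ)) x with hρf
      have hρfmeas : ∀ u, Measurable (ρf u) :=
        fun u => (ρ.measurable _).mul (measurable_const.indicator (hS1 _ _))
      have hind01 : ∀ (T : Set ℝ) (x : ℝ),
          Set.indicator T (fun _ => (1:ℝ)) x ∈ Set.Icc (0:ℝ) 1 := by
        intro T x
        by_cases h : x ∈ T
        · rw [Set.indicator_of_mem h]; exact ⟨zero_le_one, le_refl 1⟩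
        · rw [Set.indicator_of_notMem h]; exact ⟨le_refl 0, zero_le_one⟩
      have hρfmem : ∀ u x, x ∈ I01 → ρf u x ∈ I01 := by
        intro u x hx
        have h1 := ρ.mem_I01 (idx u) x hx
        have h2 := hind01 (S (idx u) ((u:ℕ) - k (idx u).castSucc)) x
        exact ⟨mul_nonneg h1.1 h2.1, mul_le_one₀ h1.2 h2.1 h2.2⟩
      have hgroupf : ∀ i : Fin q, ∀ x ∈ I01, ∑ u ∈ fib i, ρf u x = ρ.toFun i x := by
        intro i x hx
        have e1 : ∑ u ∈ fib i, ρf u x = ∑ u ∈ fib i,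
            ρ.toFun i x * Set.indicator (S i ((u:ℕ) - k i.castSucc)) (fun _ => (1:ℝ)) x := by
          refine Finset.sum_congr rfl fun u hu => ?_
          rw [hρf]
          dsimp only
          rw [hfib_mem hu]
        rw [e1, hfib_eq i, sum_block (hk_le i)
          (F := fun r => ρ.toFun i x * Set.indicator (S i r) (fun _ => (1:ℝ)) x),
          ← Finset.mul_sum, hS2 i x hx, mul_one]
      set ρ' : FracPartition q' :=
        ⟨ρf, hρfmeas, hρfmem, by
          intro x hx
          rw [← Finset.sum_fiberwise Finset.univ idx (fun u => ρf u x)]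
          rw [Finset.sum_congr rfl fun i _ => hgroupf i x hx]
          exact ρ.sum_one x hx⟩ with hρ'
      refine ⟨ρ', ?_, ?_⟩
      · intro u
        have hr : (u:ℕ) - k (idx u).castSucc < k (idx u).succ - k (idx u).castSucc := by
          have h1 := hidx1 u
          have h2 := hidx2 u
          omega
        have e2 : ∀ x : ℝ, ρf u x
            = Set.indicator (S (idx u) ((u:ℕ) - k (idx u).castSucc)) (ρ.toFun (idx u)) x := by
          intro x
          rw [hρf]
          dsimp only
          by_cases h : x ∈ S (idx u) ((u:ℕ) - k (idx u).castSucc)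
          · rw [Set.indicator_of_mem h, Set.indicator_of_mem h, mul_one]
          · rw [Set.indicator_of_notMem h, Set.indicator_of_notMem h, mul_zero]
        calc (∫ x in I01, ρ'.toFun u x) = ∫ x in I01,
              Set.indicator (S (idx u) ((u:ℕ) - k (idx u).castSucc)) (ρ.toFun (idx u)) x :=
            MeasureTheory.integral_congr_ae (Filter.Eventually.of_forall fun x => e2 x)
          _ = ∫ x in I01 ∩ S (idx u) ((u:ℕ) - k (idx u).castSucc), ρ.toFun (idx u) x := by
            rw [MeasureTheory.integral_indicator (hS1 _ _),
              MeasureTheory.Measure.restrict_restrict (hS1 _ _), Set.inter_comm]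
          _ = (q' : ℝ)⁻¹ := hS3 (idx u) _ hr
      · exact energy_eq ρ ρ' fun i x hx => (hgroupf i x hx).symm
    · -- merge direction
      rintro ⟨ρ', hρ'int, rfl⟩
      have hmem : ∀ i x, x ∈ I01 → (∑ u ∈ fib i, ρ'.toFun u x) ∈ I01 := by
        intro i x hx
        constructor
        · exact Finset.sum_nonneg fun u _ => (ρ'.mem_I01 u x hx).1
        · calc ∑ u ∈ fib i, ρ'.toFun u x ≤ ∑ u, ρ'.toFun u x :=
              Finset.sum_le_sum_of_subset_of_nonneg (Finset.subset_univ _)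
                (fun u _ _ => (ρ'.mem_I01 u x hx).1)
            _ = 1 := ρ'.sum_one x hx
      set ρ : FracPartition q :=
        ⟨fun i x => ∑ u ∈ fib i, ρ'.toFun u x,
          fun i => Finset.measurable_sum _ fun u _ => ρ'.measurable u,
          hmem, by
          intro x hx
          rw [Finset.sum_fiberwise Finset.univ idx (fun u => ρ'.toFun u x)]
          exact ρ'.sum_one x hx⟩ with hρdef
      refine ⟨ρ, ?_, ?_⟩
      · intro i
        have e1 : (∫ x in I01, ρ.toFun i x) = ∑ u ∈ fib i, ∫ x in I01, ρ'.toFun u x := by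
          rw [hρdef]
          dsimp only
          exact MeasureTheory.integral_finset_sum _ fun u _ =>
            integrableOn_of_bounded (ρ'.measurable u) (fun x hx => hbnd ρ' u x hx)
        rw [e1, Finset.sum_congr rfl fun u _ => hρ'int u, Finset.sum_const, hcard i,
          nsmul_eq_mul, ha i, Nat.cast_sub (hkk i).le, div_eq_mul_inv]
      · exact (energy_eq ρ ρ' fun i x hx => rfl).symm
end
end

section
/- Let q ≥ 1, J a symmetric q×q real matrix, and W a bounded graphon. Then for any two probability distributions a, b on [q], the microcanonical ground state energies satisfy |E_a(W,J) − E_b(W,J)| ≤ 2·‖a − b‖₁·‖W‖_∞·‖J‖_∞, where ‖a − b‖₁ = Σ_i |a_i − b_i|. -/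
open MeasureTheory Filter

noncomputable section

namespace Stmt2Aux

/-- base restricted measure -/
abbrev μ0 : Measure ℝ := volume.restrict I01

lemma meas_I01 : MeasurableSet I01 := measurableSet_Icc

instance : IsProbabilityMeasure μ0 := by
  constructor
  rw [Measure.restrict_apply_univ]
  simp [I01, Real.volume_Icc]

/-- product measure on the square -/
abbrev P : Measure (ℝ × ℝ) := μ0.prod μ0

instance : IsProbabilityMeasure P := by infer_instance

lemma ae_mem_I01 : ∀ᵐ x ∂μ0, x ∈ I01 := ae_restrict_mem meas_I01

lemma ae_mem_sq : ∀ᵐ z ∂P, z.1 ∈ I01 ∧ z.2 ∈ I01 := by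
  have : P = (volume.prod volume).restrict (I01 ×ˢ I01) := Measure.prod_restrict I01 I01
  rw [this]
  filter_upwards [ae_restrict_mem (meas_I01.prod meas_I01)] with z hz
  exact hz

variable {q : ℕ}

section FP
variable (ρ : FracPartition q)

lemma fp_nonneg {i : Fin q} {x : ℝ} (hx : x ∈ I01) : 0 ≤ ρ.toFun i x := (ρ.mem_I01 i x hx).1
lemma fp_le_one {i : Fin q} {x : ℝ} (hx : x ∈ I01) : ρ.toFun i x ≤ 1 := (ρ.mem_I01 i x hx).2

lemma fp_integrable (i : Fin q) : Integrable (ρ.toFun i) μ0 := by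
  refine ⟨(ρ.measurable i).aestronglyMeasurable, HasFiniteIntegral.of_bounded (C := 1) ?_⟩
  filter_upwards [ae_mem_I01] with x hx
  rw [Real.norm_eq_abs, abs_of_nonneg (fp_nonneg ρ hx)]
  exact fp_le_one ρ hx

lemma fp_int_nonneg (i : Fin q) : 0 ≤ ∫ x, ρ.toFun i x ∂μ0 := by
  refine integral_nonneg_of_ae ?_
  filter_upwards [ae_mem_I01] with x hx using fp_nonneg ρ hx

lemma fp_sum_int : ∑ i, ∫ x, ρ.toFun i x ∂μ0 = 1 := by
  rw [← integral_finset_sum _ (fun i _ => fp_integrable ρ i)]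
  have : ∫ x, (∑ i, ρ.toFun i x) ∂μ0 = ∫ _x, (1:ℝ) ∂μ0 := by
    refine integral_congr_ae ?_
    filter_upwards [ae_mem_I01] with x hx using ρ.sum_one x hx
  rw [this]; simp

end FP

variable {W : ℝ → ℝ → ℝ} {Wmax : ℝ}

section Wsec
variable (hWm : Measurable (Function.uncurry W)) (hWb : ∀ x y, |W x y| ≤ Wmax)
include hWm hWb

omit hWm in
include hWb in
lemma Wmax_nonneg : 0 ≤ Wmax := le_trans (abs_nonneg _) (hWb 0 0)

omit hWm hWb in
/-- the basic product integrand -/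
def F (ρ : FracPartition q) (i j : Fin q) : ℝ × ℝ → ℝ :=
  fun z => ρ.toFun i z.1 * ρ.toFun j z.2 * W z.1 z.2

omit hWb in
lemma F_meas (ρ : FracPartition q) (i j : Fin q) : Measurable (F (W := W) ρ i j) :=
  (((ρ.measurable i).comp measurable_fst).mul ((ρ.measurable j).comp measurable_snd)).mul hWm

lemma F_integrable (ρ : FracPartition q) (i j : Fin q) :
    Integrable (F (W := W) ρ i j) P := by
  refine ⟨(F_meas hWm ρ i j).aestronglyMeasurable, HasFiniteIntegral.of_bounded (C := Wmax) ?_⟩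
  filter_upwards [ae_mem_sq] with z hz
  rw [Real.norm_eq_abs, F, abs_mul, abs_mul]
  calc |ρ.toFun i z.1| * |ρ.toFun j z.2| * |W z.1 z.2|
      ≤ 1 * 1 * Wmax := by
        gcongr <;> first
          | exact abs_nonneg _
          | (rw [abs_of_nonneg (fp_nonneg ρ (by tauto))]; exact fp_le_one ρ (by tauto))
          | exact hWb _ _
    _ = Wmax := by ring

omit hWm hWb in
/-- value of the double integral -/
def T (ρ : FracPartition q) (i j : Fin q) : ℝ := ∫ z, F (W := W) ρ i j z ∂P

lemma T_eq_iterated (ρ : FracPartition q) (i j : Fin q) :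
    (∫ x in I01, ∫ y in I01, ρ.toFun i x * ρ.toFun j y * W x y) = T (W := W) ρ i j := by
  rw [T, integral_prod _ (F_integrable hWm hWb ρ i j)]
  rfl

lemma energy_eq (J : Matrix (Fin q) (Fin q) ℝ) (ρ : FracPartition q) :
    energy W J ρ = - ∑ i, ∑ j, J i j * T (W := W) ρ i j := by
  unfold energy
  congr 1
  refine Finset.sum_congr rfl fun i _ => Finset.sum_congr rfl fun j _ => ?_
  rw [T_eq_iterated hWm hWb]

lemma T_abs_le (ρ : FracPartition q) (i j : Fin q) :
    |T (W := W) ρ i j| ≤ Wmax * ((∫ x, ρ.toFun i x ∂μ0) * ∫ x, ρ.toFun j x ∂μ0) := by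
  have hint : Integrable (fun z : ℝ × ℝ => ρ.toFun i z.1 * (ρ.toFun j z.2 * Wmax)) P := by
    exact (Integrable.mul_prod (fp_integrable ρ i) ((fp_integrable ρ j).mul_const Wmax))
  calc |T (W := W) ρ i j| ≤ ∫ z, |F (W := W) ρ i j z| ∂P := (by simpa [Real.norm_eq_abs, T] using norm_integral_le_integral_norm (F (W := W) ρ i j) (μ := P))
    _ ≤ ∫ z, ρ.toFun i z.1 * (ρ.toFun j z.2 * Wmax) ∂P := by
        refine integral_mono_ae ((F_integrable hWm hWb ρ i j).abs) hint ?_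
        filter_upwards [ae_mem_sq] with z hz
        rw [F, abs_mul, abs_mul, abs_of_nonneg (fp_nonneg ρ hz.1), abs_of_nonneg (fp_nonneg ρ hz.2),
          ← mul_assoc]
        have h1 := fp_nonneg ρ (i := i) hz.1
        have h2 := fp_nonneg ρ (i := j) hz.2
        have := hWb z.1 z.2
        nlinarith [abs_nonneg (W z.1 z.2), mul_nonneg h1 h2]
    _ = (∫ x, ρ.toFun i x ∂μ0) * ∫ y, ρ.toFun j y * Wmax ∂μ0 :=
        integral_prod_mul (fun x => ρ.toFun i x) (fun y => ρ.toFun j y * Wmax)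
    _ = Wmax * ((∫ x, ρ.toFun i x ∂μ0) * ∫ x, ρ.toFun j x ∂μ0) := by
        rw [integral_mul_const]; ring

end Wsec

section Mmat
variable (a b : Fin q → ℝ)

/-- total positive discrepancy -/
def Sgap : ℝ := ∑ k, max (b k - a k) 0

/-- transport (row-stochastic) matrix carrying `b` to `a` -/
def Mmat : Fin q → Fin q → ℝ := fun k i =>
  if b k = 0 then (if i = k then 1 else 0)
  else ((if i = k then min (a k) (b k) else 0)
        + max (b k - a k) 0 * max (a i - b i) 0 / Sgap a b) / b k

lemma Sgap_nonneg : 0 ≤ Sgap a b := Finset.sum_nonneg fun k _ => le_max_right _ _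

variable (ha : IsDist a) (hb : IsDist b)
include ha hb

lemma Sgap_alt : ∑ i, max (a i - b i) 0 = Sgap a b := by
  have key : ∀ i, max (a i - b i) 0 = max (b i - a i) 0 + (a i - b i) := by
    intro i
    rcases le_total (a i) (b i) with h | h
    · rw [max_eq_right (by linarith), max_eq_left (by linarith)]; ring
    · rw [max_eq_left (by linarith), max_eq_right (by linarith)]; ring
  calc ∑ i, max (a i - b i) 0 = ∑ i, (max (b i - a i) 0 + (a i - b i)) :=
        Finset.sum_congr rfl fun i _ => key i
    _ = Sgap a b + (∑ i, a i - ∑ i, b i) := by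
        rw [Finset.sum_add_distrib, Finset.sum_sub_distrib]; rfl
    _ = Sgap a b := by rw [ha.2, hb.2]; ring

lemma eq_of_Sgap_zero (h : Sgap a b = 0) : a = b := by
  have h1 : ∀ k ∈ Finset.univ, max (b k - a k) 0 = 0 :=
    (Finset.sum_eq_zero_iff_of_nonneg (fun k _ => le_max_right _ _)).mp h
  have h2 : ∀ k ∈ Finset.univ, max (a k - b k) 0 = 0 := by
    have := Sgap_alt a b ha hb
    rw [h] at this
    exact (Finset.sum_eq_zero_iff_of_nonneg (fun k _ => le_max_right _ _)).mp this
  funext k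
  have hk1 : b k - a k ≤ 0 := max_eq_right_iff.mp (h1 k (Finset.mem_univ k))
  have hk2 : a k - b k ≤ 0 := max_eq_right_iff.mp (h2 k (Finset.mem_univ k))
  linarith

omit ha hb in
lemma Mmat_nonneg (hha : ∀ i, 0 ≤ a i) (hhb : ∀ i, 0 ≤ b i) (k i : Fin q) :
    0 ≤ Mmat a b k i := by
  unfold Mmat
  by_cases h1 : b k = 0
  · rw [if_pos h1]; split_ifs; exacts [zero_le_one, le_refl 0]
  · rw [if_neg h1]
    apply div_nonneg _ (hhb k)
    apply add_nonneg
    · split_ifs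
      · exact le_min (hha k) (hhb k)
      · exact le_refl 0
    · exact div_nonneg (mul_nonneg (le_max_right _ _) (le_max_right _ _)) (Sgap_nonneg a b)

omit hb in
lemma bMul (k i : Fin q) : b k * Mmat a b k i =
    (if i = k then min (a k) (b k) else 0)
      + max (b k - a k) 0 * max (a i - b i) 0 / Sgap a b := by
  unfold Mmat
  split_ifs with h1 h2
  · rw [h1, zero_mul]
    have e0 : min (a k) (0:ℝ) = 0 := min_eq_right (ha.1 k)
    have e1 : max (0 - a k) 0 = 0 := max_eq_right (by linarith [ha.1 k])
    rw [e0, e1]; ring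
  · rw [h1]
    have e1 : max (0 - a k) 0 = 0 := max_eq_right (by linarith [ha.1 k])
    rw [e1]; ring
  · rw [mul_div_cancel₀ _ h1]
  · rw [mul_div_cancel₀ _ h1]

lemma Mmat_row (k : Fin q) : ∑ i, Mmat a b k i = 1 := by
  by_cases h : b k = 0
  · simp [Mmat, h]
  · simp only [Mmat, if_neg h]
    rw [← Finset.sum_div, Finset.sum_add_distrib, Finset.sum_ite_eq' Finset.univ k
      (fun _ => min (a k) (b k)), if_pos (Finset.mem_univ k)]
    have e2 : ∑ i, max (b k - a k) 0 * max (a i - b i) 0 / Sgap a b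
        = max (b k - a k) 0 * (Sgap a b / Sgap a b) := by
      rw [← mul_div_assoc, ← Finset.sum_div, ← Finset.mul_sum, Sgap_alt a b ha hb,
        mul_div_assoc]
    rw [e2]
    by_cases hS : Sgap a b = 0
    · have hab := eq_of_Sgap_zero a b ha hb hS
      subst hab
      simp [div_self h]
    · rw [div_self hS, mul_one]
      have : min (a k) (b k) + max (b k - a k) 0 = b k := by
        rcases le_total (a k) (b k) with hc | hc
        · rw [min_eq_left hc, max_eq_left (by linarith)]; ring
        · rw [min_eq_right hc, max_eq_right (by linarith)]; ring
      rw [this, div_self h]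

lemma Mmat_col (i : Fin q) : ∑ k, b k * Mmat a b k i = a i := by
  have step : ∀ k, b k * Mmat a b k i =
      (if i = k then min (a k) (b k) else 0)
        + max (b k - a k) 0 * max (a i - b i) 0 / Sgap a b :=
    fun k => bMul a b ha k i
  rw [Finset.sum_congr rfl (fun k _ => step k), Finset.sum_add_distrib,
    Finset.sum_ite_eq Finset.univ i (fun k => min (a k) (b k)), if_pos (Finset.mem_univ i)]
  have e2 : ∑ k, max (b k - a k) 0 * max (a i - b i) 0 / Sgap a b
      = Sgap a b * (max (a i - b i) 0 / Sgap a b) := by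
    rw [← Finset.sum_div, ← Finset.sum_mul, mul_div_assoc]; rfl
  rw [e2]
  by_cases hS : Sgap a b = 0
  · have hab := eq_of_Sgap_zero a b ha hb hS
    subst hab
    simp
  · rw [mul_div_cancel₀ _ hS]
    rcases le_total (a i) (b i) with hc | hc
    · rw [min_eq_left hc, max_eq_right (by linarith)]; ring
    · rw [min_eq_right hc, max_eq_left (by linarith)]; ring

omit hb in
lemma Mmat_diag_mul_ge (k : Fin q) : min (a k) (b k) ≤ b k * Mmat a b k k := by
  rw [bMul a b ha k k, if_pos rfl]
  have : 0 ≤ max (b k - a k) 0 * max (a k - b k) 0 / Sgap a b :=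
    div_nonneg (mul_nonneg (le_max_right _ _) (le_max_right _ _)) (Sgap_nonneg a b)
  linarith

lemma Mmat_le_one (k i : Fin q) : Mmat a b k i ≤ 1 := by
  calc Mmat a b k i ≤ ∑ j, Mmat a b k j :=
        Finset.single_le_sum (fun j _ => Mmat_nonneg a b ha.1 hb.1 k j) (Finset.mem_univ i)
    _ = 1 := Mmat_row a b ha hb k

lemma sum_b_oneSubDiag : ∑ k, b k * (1 - Mmat a b k k) ≤ Sgap a b := by
  have h1 : ∑ k, b k * (1 - Mmat a b k k) = 1 - ∑ k, b k * Mmat a b k k := by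
    simp only [mul_sub, mul_one]
    rw [Finset.sum_sub_distrib, hb.2]
  have h2 : ∑ k, min (a k) (b k) ≤ ∑ k, b k * Mmat a b k k :=
    Finset.sum_le_sum fun k _ => Mmat_diag_mul_ge a b ha k
  have h3 : ∑ k, min (a k) (b k) = 1 - Sgap a b := by
    have : ∀ k, min (a k) (b k) = b k - max (b k - a k) 0 := by
      intro k
      rcases le_total (a k) (b k) with hc | hc
      · rw [min_eq_left hc, max_eq_left (by linarith)]; ring
      · rw [min_eq_right hc, max_eq_right (by linarith)]; ring
    rw [Finset.sum_congr rfl (fun k _ => this k), Finset.sum_sub_distrib, hb.2]; rfl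
  linarith

lemma abs_sum_eq_two_Sgap : ∑ i, |a i - b i| = 2 * Sgap a b := by
  have key : ∀ i, |a i - b i| = max (a i - b i) 0 + max (b i - a i) 0 := by
    intro i
    rcases le_total (a i) (b i) with h | h
    · rw [abs_of_nonpos (by linarith), max_eq_right (by linarith),
        max_eq_left (by linarith)]; ring
    · rw [abs_of_nonneg (by linarith), max_eq_left (by linarith),
        max_eq_right (by linarith)]; ring
  rw [Finset.sum_congr rfl (fun i _ => key i), Finset.sum_add_distrib,
    Sgap_alt a b ha hb]
  rw [show (∑ i, max (b i - a i) 0) = Sgap a b from rfl]; ring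

end Mmat

section Main
variable {W : ℝ → ℝ → ℝ} {Wmax Jmax : ℝ} {a b : Fin q → ℝ}

lemma sum_pair_mul (f g : Fin q → ℝ) :
    ∑ r : Fin q × Fin q, f r.1 * g r.2 = (∑ k, f k) * (∑ l, g l) := by
  rw [← Finset.univ_product_univ, Finset.sum_product, Fintype.sum_mul_sum]

/-- the transported fractional partition -/
def transFP (ha : IsDist a) (hb : IsDist b) (ρ : FracPartition q) : FracPartition q where
  toFun := fun i x => ∑ k, Mmat a b k i * ρ.toFun k x
  measurable := fun i => Finset.measurable_sum _ fun k _ => (ρ.measurable k).const_mul _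
  mem_I01 := by
    intro i x hx
    have hnn : ∀ j : Fin q, 0 ≤ ∑ k, Mmat a b k j * ρ.toFun k x := fun j =>
      Finset.sum_nonneg fun k _ =>
        mul_nonneg (Mmat_nonneg a b ha.1 hb.1 k j) (fp_nonneg ρ hx)
    have hsum : ∑ j, ∑ k, Mmat a b k j * ρ.toFun k x = 1 := by
      rw [Finset.sum_comm]
      have : ∀ k, ∑ j, Mmat a b k j * ρ.toFun k x = ρ.toFun k x := by
        intro k
        rw [← Finset.sum_mul, Mmat_row a b ha hb k, one_mul]
      rw [Finset.sum_congr rfl fun k _ => this k]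
      exact ρ.sum_one x hx
    refine ⟨hnn i, ?_⟩
    calc ∑ k, Mmat a b k i * ρ.toFun k x
        ≤ ∑ j, ∑ k, Mmat a b k j * ρ.toFun k x :=
          Finset.single_le_sum (fun j _ => hnn j) (Finset.mem_univ i)
      _ = 1 := hsum
  sum_one := by
    intro x hx
    rw [Finset.sum_comm]
    have : ∀ k, ∑ j, Mmat a b k j * ρ.toFun k x = ρ.toFun k x := by
      intro k
      rw [← Finset.sum_mul, Mmat_row a b ha hb k, one_mul]
    rw [Finset.sum_congr rfl fun k _ => this k]
    exact ρ.sum_one x hx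

lemma transFP_integral (ha : IsDist a) (hb : IsDist b) (ρ : FracPartition q)
    (hρ : ∀ i, (∫ x, ρ.toFun i x ∂μ0) = b i) (i : Fin q) :
    (∫ x, (transFP ha hb ρ).toFun i x ∂μ0) = a i := by
  show (∫ x, ∑ k, Mmat a b k i * ρ.toFun k x ∂μ0) = a i
  rw [integral_finset_sum _ (fun k _ => (fp_integrable ρ k).const_mul _)]
  have : ∀ k, (∫ x, Mmat a b k i * ρ.toFun k x ∂μ0) = b k * Mmat a b k i := by
    intro k
    rw [integral_const_mul, hρ k, mul_comm]
  rw [Finset.sum_congr rfl fun k _ => this k, Mmat_col a b ha hb i]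

lemma transFP_T (hWm : Measurable (Function.uncurry W)) (hWb : ∀ x y, |W x y| ≤ Wmax)
    (ha : IsDist a) (hb : IsDist b) (ρ : FracPartition q) (i j : Fin q) :
    T (W := W) (transFP ha hb ρ) i j
      = ∑ r : Fin q × Fin q, (Mmat a b r.1 i * Mmat a b r.2 j) * T (W := W) ρ r.1 r.2 := by
  have hpt : F (W := W) (transFP ha hb ρ) i j
      = fun z => ∑ r : Fin q × Fin q,
          (Mmat a b r.1 i * Mmat a b r.2 j) * F (W := W) ρ r.1 r.2 z := by
    funext z
    show (∑ k, Mmat a b k i * ρ.toFun k z.1) * (∑ l, Mmat a b l j * ρ.toFun l z.2) * W z.1 z.2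
      = _
    rw [← Finset.univ_product_univ, Finset.sum_product, Fintype.sum_mul_sum]
    rw [Finset.sum_mul]
    refine Finset.sum_congr rfl fun k _ => ?_
    rw [Finset.sum_mul]
    refine Finset.sum_congr rfl fun l _ => ?_
    show _ = Mmat a b k i * Mmat a b l j * F (W := W) ρ k l z
    rw [F]; ring
  rw [T, hpt, integral_finset_sum _
    (fun r _ => ((F_integrable hWm hWb ρ r.1 r.2).const_mul _))]
  exact Finset.sum_congr rfl fun r _ => integral_const_mul _ _

lemma energy_pair (hWm : Measurable (Function.uncurry W)) (hWb : ∀ x y, |W x y| ≤ Wmax)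
    (J : Matrix (Fin q) (Fin q) ℝ) (σ : FracPartition q) :
    energy W J σ = - ∑ p : Fin q × Fin q, J p.1 p.2 * T (W := W) σ p.1 p.2 := by
  rw [energy_eq hWm hWb J σ, ← Finset.univ_product_univ, Finset.sum_product]

lemma Bbound (ha : IsDist a) (hb : IsDist b) (J : Matrix (Fin q) (Fin q) ℝ)
    (hJb : ∀ i j, |J i j| ≤ Jmax) (hJmax : 0 ≤ Jmax) (k l : Fin q) :
    |J k l - ∑ p : Fin q × Fin q, Mmat a b k p.1 * Mmat a b l p.2 * J p.1 p.2|
      ≤ 2 * Jmax * ((1 - Mmat a b k k) + (1 - Mmat a b l l)) := by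
  have hsum1 : ∑ p : Fin q × Fin q, Mmat a b k p.1 * Mmat a b l p.2 = 1 := by
    rw [sum_pair_mul, Mmat_row a b ha hb k, Mmat_row a b ha hb l, one_mul]
  have hrw : J k l - ∑ p : Fin q × Fin q, Mmat a b k p.1 * Mmat a b l p.2 * J p.1 p.2
      = ∑ p : Fin q × Fin q, Mmat a b k p.1 * Mmat a b l p.2 * (J k l - J p.1 p.2) := by
    simp only [mul_sub]
    rw [Finset.sum_sub_distrib, ← Finset.sum_mul, hsum1, one_mul]
  rw [hrw]
  have hMnn : ∀ u v : Fin q, 0 ≤ Mmat a b u v := Mmat_nonneg a b ha.1 hb.1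
  have hMle : ∀ u v : Fin q, Mmat a b u v ≤ 1 := Mmat_le_one a b ha hb
  calc |∑ p : Fin q × Fin q, Mmat a b k p.1 * Mmat a b l p.2 * (J k l - J p.1 p.2)|
      ≤ ∑ p : Fin q × Fin q, |Mmat a b k p.1 * Mmat a b l p.2 * (J k l - J p.1 p.2)| :=
        Finset.abs_sum_le_sum_abs _ _
    _ ≤ ∑ p : Fin q × Fin q, (2 * Jmax * (Mmat a b k p.1 * Mmat a b l p.2)
          - (if p = (k, l) then 2 * Jmax * (Mmat a b k k * Mmat a b l l) else 0)) := by
        refine Finset.sum_le_sum fun p _ => ?_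
        rw [abs_mul, abs_of_nonneg (mul_nonneg (hMnn k p.1) (hMnn l p.2))]
        by_cases hp : p = (k, l)
        · subst hp
          rw [if_pos rfl]
          simp only [sub_self, abs_zero, mul_zero]
          simp
        · rw [if_neg hp, sub_zero]
          have habs : |J k l - J p.1 p.2| ≤ 2 * Jmax := by
            calc |J k l - J p.1 p.2| ≤ |J k l| + |J p.1 p.2| := abs_sub _ _
              _ ≤ 2 * Jmax := by have := hJb k l; have := hJb p.1 p.2; linarith
          calc Mmat a b k p.1 * Mmat a b l p.2 * |J k l - J p.1 p.2|
              ≤ Mmat a b k p.1 * Mmat a b l p.2 * (2 * Jmax) := by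
                gcongr
                exact mul_nonneg (hMnn k p.1) (hMnn l p.2)
            _ = 2 * Jmax * (Mmat a b k p.1 * Mmat a b l p.2) := by ring
    _ = 2 * Jmax * (1 - Mmat a b k k * Mmat a b l l) := by
        rw [Finset.sum_sub_distrib, ← Finset.mul_sum, hsum1,
          Finset.sum_ite_eq' Finset.univ (k, l)
            (fun _ => 2 * Jmax * (Mmat a b k k * Mmat a b l l)),
          if_pos (Finset.mem_univ _)]
        ring
    _ ≤ 2 * Jmax * ((1 - Mmat a b k k) + (1 - Mmat a b l l)) := by
        have h1 := hMnn k k; have h2 := hMnn l l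
        have h3 := hMle k k; have h4 := hMle l l
        nlinarith [mul_nonneg hJmax (mul_nonneg (sub_nonneg.mpr h3) (sub_nonneg.mpr h4))]

end Main

section Final
variable {W : ℝ → ℝ → ℝ} {Wmax Jmax : ℝ} {a b : Fin q → ℝ}

lemma energy_transFP_le (hWm : Measurable (Function.uncurry W))
    (hWb : ∀ x y, |W x y| ≤ Wmax) (J : Matrix (Fin q) (Fin q) ℝ)
    (hJb : ∀ i j, |J i j| ≤ Jmax) (hJmax : 0 ≤ Jmax)
    (ha : IsDist a) (hb : IsDist b) (ρ : FracPartition q)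
    (hρ : ∀ i, (∫ x, ρ.toFun i x ∂μ0) = b i) :
    energy W J (transFP ha hb ρ)
      ≤ energy W J ρ + 2 * (∑ i, |a i - b i|) * Wmax * Jmax := by
  have hW0 : 0 ≤ Wmax := Wmax_nonneg hWb
  have hdiff : energy W J (transFP ha hb ρ) - energy W J ρ
      = ∑ r : Fin q × Fin q, T (W := W) ρ r.1 r.2 *
          (J r.1 r.2 - ∑ p : Fin q × Fin q,
            Mmat a b r.1 p.1 * Mmat a b r.2 p.2 * J p.1 p.2) := by
    rw [energy_pair hWm hWb J (transFP ha hb ρ), energy_pair hWm hWb J ρ]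
    have e1 : ∀ p : Fin q × Fin q, J p.1 p.2 * T (W := W) (transFP ha hb ρ) p.1 p.2
        = ∑ r : Fin q × Fin q,
            J p.1 p.2 * ((Mmat a b r.1 p.1 * Mmat a b r.2 p.2) * T (W := W) ρ r.1 r.2) := by
      intro p
      rw [transFP_T hWm hWb ha hb ρ p.1 p.2, Finset.mul_sum]
    rw [Finset.sum_congr rfl fun p _ => e1 p, Finset.sum_comm]
    have e2 : ∑ r : Fin q × Fin q, ∑ p : Fin q × Fin q,
        J p.1 p.2 * ((Mmat a b r.1 p.1 * Mmat a b r.2 p.2) * T (W := W) ρ r.1 r.2)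
        = ∑ r : Fin q × Fin q, T (W := W) ρ r.1 r.2 *
            (∑ p : Fin q × Fin q, Mmat a b r.1 p.1 * Mmat a b r.2 p.2 * J p.1 p.2) := by
      refine Finset.sum_congr rfl fun r _ => ?_
      rw [Finset.mul_sum]
      exact Finset.sum_congr rfl fun p _ => by ring
    rw [e2]
    have e3 : ∑ p : Fin q × Fin q, J p.1 p.2 * T (W := W) ρ p.1 p.2
        = ∑ r : Fin q × Fin q, T (W := W) ρ r.1 r.2 * J r.1 r.2 :=
      Finset.sum_congr rfl fun p _ => by ring
    rw [e3]
    simp only [mul_sub]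
    rw [Finset.sum_sub_distrib]
    ring
  have hbound : ∑ r : Fin q × Fin q, T (W := W) ρ r.1 r.2 *
      (J r.1 r.2 - ∑ p : Fin q × Fin q,
        Mmat a b r.1 p.1 * Mmat a b r.2 p.2 * J p.1 p.2)
      ≤ 2 * (∑ i, |a i - b i|) * Wmax * Jmax := by
    have hMnn : ∀ u v : Fin q, 0 ≤ Mmat a b u v := Mmat_nonneg a b ha.1 hb.1
    have hMle : ∀ u v : Fin q, Mmat a b u v ≤ 1 := Mmat_le_one a b ha hb
    calc ∑ r : Fin q × Fin q, T (W := W) ρ r.1 r.2 *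
        (J r.1 r.2 - ∑ p : Fin q × Fin q,
          Mmat a b r.1 p.1 * Mmat a b r.2 p.2 * J p.1 p.2)
        ≤ ∑ r : Fin q × Fin q, (Wmax * (b r.1 * b r.2)) *
            (2 * Jmax * ((1 - Mmat a b r.1 r.1) + (1 - Mmat a b r.2 r.2))) := by
          refine Finset.sum_le_sum fun r _ => ?_
          have hT : |T (W := W) ρ r.1 r.2| ≤ Wmax * (b r.1 * b r.2) := by
            have := T_abs_le hWm hWb ρ r.1 r.2
            rwa [hρ r.1, hρ r.2] at this
          have hB := Bbound ha hb J hJb hJmax r.1 r.2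
          calc T (W := W) ρ r.1 r.2 * (J r.1 r.2 - ∑ p : Fin q × Fin q,
              Mmat a b r.1 p.1 * Mmat a b r.2 p.2 * J p.1 p.2)
              ≤ |T (W := W) ρ r.1 r.2 * (J r.1 r.2 - ∑ p : Fin q × Fin q,
                  Mmat a b r.1 p.1 * Mmat a b r.2 p.2 * J p.1 p.2)| := le_abs_self _
            _ = |T (W := W) ρ r.1 r.2| * |J r.1 r.2 - ∑ p : Fin q × Fin q,
                  Mmat a b r.1 p.1 * Mmat a b r.2 p.2 * J p.1 p.2| := abs_mul _ _
            _ ≤ (Wmax * (b r.1 * b r.2)) *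
                  (2 * Jmax * ((1 - Mmat a b r.1 r.1) + (1 - Mmat a b r.2 r.2))) := by
                apply mul_le_mul hT hB (abs_nonneg _)
                exact mul_nonneg hW0 (mul_nonneg (hb.1 r.1) (hb.1 r.2))
      _ = 2 * Wmax * Jmax * ∑ r : Fin q × Fin q,
            ((b r.1 * (1 - Mmat a b r.1 r.1)) * b r.2
              + b r.1 * (b r.2 * (1 - Mmat a b r.2 r.2))) := by
          rw [Finset.mul_sum]
          exact Finset.sum_congr rfl fun r _ => by ring
      _ = 2 * Wmax * Jmax *
            ((∑ k, b k * (1 - Mmat a b k k)) * (∑ l, b l)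
              + (∑ k, b k) * (∑ l, b l * (1 - Mmat a b l l))) := by
          rw [Finset.sum_add_distrib,
            sum_pair_mul (fun k => b k * (1 - Mmat a b k k)) b,
            sum_pair_mul b (fun l => b l * (1 - Mmat a b l l))]
      _ = 2 * Wmax * Jmax * (2 * ∑ k, b k * (1 - Mmat a b k k)) := by
          rw [hb.2]; ring
      _ ≤ 2 * Wmax * Jmax * (2 * Sgap a b) := by
          have := sum_b_oneSubDiag a b ha hb
          have h0 : 0 ≤ 2 * Wmax * Jmax := by positivity
          nlinarith
      _ = 2 * (∑ i, |a i - b i|) * Wmax * Jmax := by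
          rw [abs_sum_eq_two_Sgap a b ha hb]; ring
  linarith

lemma energy_abs_le (hWm : Measurable (Function.uncurry W))
    (hWb : ∀ x y, |W x y| ≤ Wmax) (J : Matrix (Fin q) (Fin q) ℝ)
    (hJb : ∀ i j, |J i j| ≤ Jmax) (hJmax : 0 ≤ Jmax) (ρ : FracPartition q) :
    |energy W J ρ| ≤ Jmax * Wmax := by
  have hW0 : 0 ≤ Wmax := Wmax_nonneg hWb
  rw [energy_eq hWm hWb, abs_neg]
  calc |∑ i, ∑ j, J i j * T (W := W) ρ i j|
      ≤ ∑ i, |∑ j, J i j * T (W := W) ρ i j| := Finset.abs_sum_le_sum_abs _ _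
    _ ≤ ∑ i, ∑ j, |J i j * T (W := W) ρ i j| :=
        Finset.sum_le_sum fun i _ => Finset.abs_sum_le_sum_abs _ _
    _ ≤ ∑ i, ∑ j, Jmax * (Wmax * ((∫ x, ρ.toFun i x ∂μ0) * ∫ x, ρ.toFun j x ∂μ0)) := by
        refine Finset.sum_le_sum fun i _ => Finset.sum_le_sum fun j _ => ?_
        rw [abs_mul]
        exact mul_le_mul (hJb i j) (T_abs_le hWm hWb ρ i j) (abs_nonneg _) hJmax
    _ = Jmax * Wmax * ∑ i, ∑ j, (∫ x, ρ.toFun i x ∂μ0) * ∫ x, ρ.toFun j x ∂μ0 := by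
        rw [Finset.mul_sum]
        refine Finset.sum_congr rfl fun i _ => ?_
        rw [Finset.mul_sum]
        exact Finset.sum_congr rfl fun j _ => by ring
    _ = Jmax * Wmax := by
        rw [← Fintype.sum_mul_sum, fp_sum_int ρ]; ring

/-- constant fractional partition -/
def constFP (hb : IsDist b) : FracPartition q where
  toFun := fun i _ => b i
  measurable := fun _ => measurable_const
  mem_I01 := fun i _ _ =>
    ⟨hb.1 i, (Finset.single_le_sum (fun j _ => hb.1 j) (Finset.mem_univ i)).trans_eq hb.2⟩
  sum_one := fun _ _ => hb.2

lemma constFP_integral (hb : IsDist b) (i : Fin q) :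
    (∫ x, (constFP hb).toFun i x ∂μ0) = b i := by
  show (∫ _x, b i ∂μ0) = b i
  simp

lemma mgse_le_add (hWm : Measurable (Function.uncurry W))
    (hWb : ∀ x y, |W x y| ≤ Wmax) (J : Matrix (Fin q) (Fin q) ℝ)
    (hJb : ∀ i j, |J i j| ≤ Jmax) (hJmax : 0 ≤ Jmax)
    (ha : IsDist a) (hb : IsDist b) :
    mgse W J a ≤ mgse W J b + 2 * (∑ i, |a i - b i|) * Wmax * Jmax := by
  set C := 2 * (∑ i, |a i - b i|) * Wmax * Jmax with hC
  have hbdd : BddBelow {e | ∃ ρ : FracPartition q,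
      (∀ i, (∫ x in I01, ρ.toFun i x) = a i) ∧ e = energy W J ρ} := by
    refine ⟨-(Jmax * Wmax), fun e he => ?_⟩
    obtain ⟨ρ, -, rfl⟩ := he
    have := energy_abs_le hWm hWb J hJb hJmax ρ
    have := neg_abs_le (energy W J ρ)
    linarith
  have hne : {e | ∃ ρ : FracPartition q,
      (∀ i, (∫ x in I01, ρ.toFun i x) = b i) ∧ e = energy W J ρ}.Nonempty :=
    ⟨energy W J (constFP hb), constFP hb, fun i => constFP_integral hb i, rfl⟩
  have key : ∀ e ∈ {e | ∃ ρ : FracPartition q,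
      (∀ i, (∫ x in I01, ρ.toFun i x) = b i) ∧ e = energy W J ρ},
      mgse W J a - C ≤ e := by
    rintro e ⟨ρ, hρ, rfl⟩
    have h1 : mgse W J a ≤ energy W J (transFP ha hb ρ) :=
      csInf_le hbdd ⟨transFP ha hb ρ, fun i => transFP_integral ha hb ρ hρ i, rfl⟩
    have h2 := energy_transFP_le hWm hWb J hJb hJmax ha hb ρ hρ
    rw [← hC] at h2
    linarith
  have := le_csInf hne key
  have hmb : mgse W J b = sInf {e | ∃ ρ : FracPartition q,
      (∀ i, (∫ x in I01, ρ.toFun i x) = b i) ∧ e = energy W J ρ} := rfl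
  rw [hmb]
  linarith

end Final

end Stmt2Aux

theorem stmt2 (q : ℕ) (hq : 1 ≤ q) (J : Matrix (Fin q) (Fin q) ℝ) (hJ : J.IsSymm)
    (W : ℝ → ℝ → ℝ) (hW : IsGraphon W) (Wmax Jmax : ℝ)
    (hWb : ∀ x y, |W x y| ≤ Wmax) (hJb : ∀ i j, |J i j| ≤ Jmax)
    (a b : Fin q → ℝ) (ha : IsDist a) (hb : IsDist b) :
    |mgse W J a - mgse W J b| ≤ 2 * (∑ i, |a i - b i|) * Wmax * Jmax := by
  obtain ⟨hWm, -, -⟩ := hW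
  have i0 : Fin q := ⟨0, hq⟩
  have hJmax : 0 ≤ Jmax := (abs_nonneg _).trans (hJb i0 i0)
  have h1 := Stmt2Aux.mgse_le_add hWm hWb J hJb hJmax ha hb
  have h2 := Stmt2Aux.mgse_le_add hWm hWb J hJb hJmax hb ha
  have hsym : (∑ i, |b i - a i|) = ∑ i, |a i - b i| :=
    Finset.sum_congr rfl fun i _ => abs_sub_comm _ _
  rw [hsym] at h2
  rw [abs_sub_le_iff]
  constructor <;> linarith
end
end

section
/- Let I be a bounded interval and (W_n) a sequence of graphons taking values in I. If for every q ≥ 1 and every symmetric q×q matrix J the sequence (E_b(W_n, J))_n converges, where b = (1/q,…,1/q) is the uniform distribution on [q], then for every q ≥ 1, every probability distribution a on [q], and every symmetric q×q matrix J, the sequence (E_a(W_n, J))_n converges. -/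
open MeasureTheory Filter

noncomputable section

namespace Aux5

lemma measI01 : MeasurableSet I01 := measurableSet_Icc

lemma volI01 : (volume : Measure ℝ) I01 = 1 := by
  simp [I01, Real.volume_Icc]

lemma intOn {f : ℝ → ℝ} (hf : Measurable f) {C : ℝ}
    (hC : ∀ x ∈ I01, |f x| ≤ C) : IntegrableOn f I01 := by
  apply Measure.integrableOn_of_bounded (M := C) (by simp [volI01]) hf.aestronglyMeasurable
  filter_upwards [ae_restrict_mem measI01] with x hx using hC x hx

lemma setIntegral_const' (c : ℝ) : (∫ _x in I01, c) = c := by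
  rw [setIntegral_const]; simp [Measure.real, volI01]

lemma integral_abs_le {f : ℝ → ℝ} (hf : Measurable f) {C : ℝ}
    (hC : ∀ x ∈ I01, |f x| ≤ C) : |∫ x in I01, f x| ≤ C := by
  calc |∫ x in I01, f x| ≤ C * ((volume : Measure ℝ) I01).toReal := by
        rw [← Real.norm_eq_abs]
        apply norm_setIntegral_le_of_norm_le_const (by simp [volI01])
        · intro x hx; simpa using hC x hx
    _ = C := by simp [volI01]

/-- inner integral -/
def Hh (W : ℝ → ℝ → ℝ) (g : ℝ → ℝ) (x : ℝ) : ℝ := ∫ y in I01, g y * W x y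

/-- double integral -/
def Dq (W : ℝ → ℝ → ℝ) (f g : ℝ → ℝ) : ℝ := ∫ x in I01, f x * Hh W g x

/-- nice function: measurable, bounded by C on I01 -/
def Nice (C : ℝ) (f : ℝ → ℝ) : Prop := Measurable f ∧ ∀ x ∈ I01, |f x| ≤ C

variable {W : ℝ → ℝ → ℝ} {M : ℝ}

lemma measWx (hWm : Measurable (Function.uncurry W)) (x : ℝ) :
    Measurable (fun y => W x y) :=
  hWm.comp measurable_prodMk_left

lemma inner_nice (hWm : Measurable (Function.uncurry W)) (hM : ∀ x y, |W x y| ≤ M)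
    {g : ℝ → ℝ} {C : ℝ} (hg : Nice C g) (x : ℝ) :
    Nice (C * M) (fun y => g y * W x y) := by
  refine ⟨hg.1.mul (measWx hWm x), fun y hy => ?_⟩
  rw [abs_mul]
  exact mul_le_mul (hg.2 y hy) (hM x y) (abs_nonneg _)
    (le_trans (abs_nonneg _) (hg.2 y hy))

lemma inner_int (hWm : Measurable (Function.uncurry W)) (hM : ∀ x y, |W x y| ≤ M)
    {g : ℝ → ℝ} {C : ℝ} (hg : Nice C g) (x : ℝ) :
    IntegrableOn (fun y => g y * W x y) I01 :=
  intOn (inner_nice hWm hM hg x).1 (inner_nice hWm hM hg x).2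

lemma Hh_bound (hWm : Measurable (Function.uncurry W)) (hM : ∀ x y, |W x y| ≤ M)
    {g : ℝ → ℝ} {C : ℝ} (hg : Nice C g) (x : ℝ) :
    |Hh W g x| ≤ C * M :=
  integral_abs_le (inner_nice hWm hM hg x).1 (inner_nice hWm hM hg x).2

lemma Hh_meas (hWm : Measurable (Function.uncurry W))
    {g : ℝ → ℝ} (hg : Measurable g) : Measurable (Hh W g) := by
  have : StronglyMeasurable (fun p : ℝ × ℝ => g p.2 * W p.1 p.2) :=
    ((hg.comp measurable_snd).mul hWm).stronglyMeasurable
  exact this.integral_prod_right'.measurable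

lemma Hh_nice (hWm : Measurable (Function.uncurry W)) (hM : ∀ x y, |W x y| ≤ M)
    {g : ℝ → ℝ} {C : ℝ} (hg : Nice C g) : Nice (C * M) (Hh W g) :=
  ⟨Hh_meas hWm hg.1, fun x _ => Hh_bound hWm hM hg x⟩

lemma Dq_integrand_nice (hWm : Measurable (Function.uncurry W)) (hM : ∀ x y, |W x y| ≤ M)
    {f g : ℝ → ℝ} {Cf Cg : ℝ} (hf : Nice Cf f) (hg : Nice Cg g) :
    Nice (Cf * (Cg * M)) (fun x => f x * Hh W g x) := by
  refine ⟨hf.1.mul (Hh_meas hWm hg.1), fun x hx => ?_⟩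
  rw [abs_mul]
  exact mul_le_mul (hf.2 x hx) (Hh_bound hWm hM hg x) (abs_nonneg _)
    (le_trans (abs_nonneg _) (hf.2 x hx))

lemma Dq_integrand_int (hWm : Measurable (Function.uncurry W)) (hM : ∀ x y, |W x y| ≤ M)
    {f g : ℝ → ℝ} {Cf Cg : ℝ} (hf : Nice Cf f) (hg : Nice Cg g) :
    IntegrableOn (fun x => f x * Hh W g x) I01 :=
  intOn (Dq_integrand_nice hWm hM hf hg).1 (Dq_integrand_nice hWm hM hf hg).2

lemma Dq_bound (hWm : Measurable (Function.uncurry W)) (hM : ∀ x y, |W x y| ≤ M)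
    {f g : ℝ → ℝ} {Cf Cg : ℝ} (hf : Nice Cf f) (hg : Nice Cg g) :
    |Dq W f g| ≤ Cf * (Cg * M) :=
  integral_abs_le (Dq_integrand_nice hWm hM hf hg).1 (Dq_integrand_nice hWm hM hf hg).2

/-- the double integral in `energy` equals `Dq`. -/
lemma double_eq_Dq {f g : ℝ → ℝ} :
    (∫ x in I01, ∫ y in I01, f x * g y * W x y) = Dq W f g := by
  unfold Dq Hh
  apply integral_congr_ae
  filter_upwards with x
  rw [← integral_const_mul]
  congr 1; ext y; ring



/-- difference bound -/
lemma Dq_diff (hWm : Measurable (Function.uncurry W)) (hM : ∀ x y, |W x y| ≤ M)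
    {f f' g g' : ℝ → ℝ} (hf : Nice 1 f) (hf' : Nice 1 f') (hg : Nice 1 g) (hg' : Nice 1 g') :
    |Dq W f g - Dq W f' g'| ≤
      M * (∫ x in I01, |f x - f' x|) + M * (∫ y in I01, |g y - g' y|) := by
  have hsub : Nice 2 (fun x => f x - f' x) := by
    refine ⟨hf.1.sub hf'.1, fun x hx => ?_⟩
    calc |f x - f' x| ≤ |f x| + |f' x| := abs_sub _ _
      _ ≤ 1 + 1 := add_le_add (hf.2 x hx) (hf'.2 x hx)
      _ = 2 := by norm_num
  have hsubg : Nice 2 (fun y => g y - g' y) := by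
    refine ⟨hg.1.sub hg'.1, fun x hx => ?_⟩
    calc |g x - g' x| ≤ |g x| + |g' x| := abs_sub _ _
      _ ≤ 1 + 1 := add_le_add (hg.2 x hx) (hg'.2 x hx)
      _ = 2 := by norm_num
  have key1 : Dq W f g - Dq W f' g = ∫ x in I01, (f x - f' x) * Hh W g x := by
    unfold Dq
    rw [← integral_sub (Dq_integrand_int hWm hM hf hg) (Dq_integrand_int hWm hM hf' hg)]
    congr 1; ext x; ring
  have key2 : Dq W f' g - Dq W f' g' = ∫ x in I01, f' x * (Hh W g x - Hh W g' x) := by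
    unfold Dq
    rw [← integral_sub (Dq_integrand_int hWm hM hf' hg) (Dq_integrand_int hWm hM hf' hg')]
    congr 1; ext x; ring
  have habs1 : |Dq W f g - Dq W f' g| ≤ M * ∫ x in I01, |f x - f' x| := by
    rw [key1]
    have hint1 : IntegrableOn (fun x => |(f x - f' x) * Hh W g x|) I01 := by
      apply intOn ((hsub.1.mul (Hh_meas hWm hg.1)).abs) (C := 2 * (1*M))
      intro x hx
      simp only [Pi.mul_apply]
      rw [abs_abs, abs_mul]
      exact mul_le_mul (hsub.2 x hx) (Hh_bound hWm hM hg x) (abs_nonneg _) (by norm_num)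
    have hint2 : IntegrableOn (fun x => M * |f x - f' x|) I01 := by
      apply intOn (measurable_const.mul hsub.1.abs) (C := |M| * 2)
      intro x hx
      simp only [Pi.mul_apply]
      rw [abs_mul, abs_abs]
      exact mul_le_mul_of_nonneg_left (hsub.2 x hx) (abs_nonneg _)
    calc |∫ x in I01, (f x - f' x) * Hh W g x| ≤ ∫ x in I01, |(f x - f' x) * Hh W g x| := by
          rw [← Real.norm_eq_abs]
          exact norm_integral_le_integral_norm _
      _ ≤ ∫ x in I01, M * |f x - f' x| := by
          apply setIntegral_mono_on hint1 hint2 measI01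
          intro x hx
          rw [abs_mul, mul_comm M]
          apply mul_le_mul_of_nonneg_left _ (abs_nonneg _)
          simpa using Hh_bound hWm hM hg x
      _ = M * ∫ x in I01, |f x - f' x| := integral_const_mul _ _
  have habs2 : |Dq W f' g - Dq W f' g'| ≤ M * ∫ y in I01, |g y - g' y| := by
    rw [key2]
    have hhb : ∀ x, |Hh W g x - Hh W g' x| ≤ M * ∫ y in I01, |g y - g' y| := by
      intro x
      have : Hh W g x - Hh W g' x = ∫ y in I01, (g y - g' y) * W x y := by
        unfold Hh
        rw [← integral_sub (inner_int hWm hM hg x) (inner_int hWm hM hg' x)]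
        congr 1; ext y; ring
      rw [this]
      have hint1 : IntegrableOn (fun y => |(g y - g' y) * W x y|) I01 := by
        apply intOn ((hsubg.1.mul (measWx hWm x)).abs) (C := 2 * M)
        intro y hy
        simp only [Pi.mul_apply]
        rw [abs_abs, abs_mul]
        exact mul_le_mul (hsubg.2 y hy) (hM x y) (abs_nonneg _) (by norm_num)
      have hint2 : IntegrableOn (fun y => M * |g y - g' y|) I01 := by
        apply intOn (measurable_const.mul hsubg.1.abs) (C := |M| * 2)
        intro y hy
        simp only [Pi.mul_apply]
        rw [abs_mul, abs_abs]
        exact mul_le_mul_of_nonneg_left (hsubg.2 y hy) (abs_nonneg _)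
      calc |∫ y in I01, (g y - g' y) * W x y| ≤ ∫ y in I01, |(g y - g' y) * W x y| := by
            rw [← Real.norm_eq_abs]; exact norm_integral_le_integral_norm _
        _ ≤ ∫ y in I01, M * |g y - g' y| := by
            apply setIntegral_mono_on hint1 hint2 measI01
            intro y _
            rw [abs_mul, mul_comm M]
            exact mul_le_mul_of_nonneg_left (hM x y) (abs_nonneg _)
        _ = M * ∫ y in I01, |g y - g' y| := integral_const_mul _ _
    have hM0 : 0 ≤ M := le_trans (abs_nonneg _) (hM 0 0)
    have hCb : 0 ≤ M * ∫ y in I01, |g y - g' y| := by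
      apply mul_nonneg hM0
      exact integral_nonneg (fun y => abs_nonneg _)
    apply integral_abs_le (C := M * ∫ y in I01, |g y - g' y|)
    · exact hf'.1.mul ((Hh_meas hWm hg.1).sub (Hh_meas hWm hg'.1))
    · intro x hx
      rw [abs_mul]
      calc |f' x| * |Hh W g x - Hh W g' x| ≤ 1 * (M * ∫ y in I01, |g y - g' y|) :=
            mul_le_mul (hf'.2 x hx) (hhb x) (abs_nonneg _) zero_le_one
        _ = M * ∫ y in I01, |g y - g' y| := one_mul _
  calc |Dq W f g - Dq W f' g'| = |(Dq W f g - Dq W f' g) + (Dq W f' g - Dq W f' g')| := by ring_nf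
    _ ≤ |Dq W f g - Dq W f' g| + |Dq W f' g - Dq W f' g'| := abs_add_le _ _
    _ ≤ _ := add_le_add habs1 habs2


/-- Finset-sum linearity in the left slot. -/
lemma Dq_sum_left (hWm : Measurable (Function.uncurry W)) (hM : ∀ x y, |W x y| ≤ M) {ι : Type*} (A : Finset ι) (f : ι → ℝ → ℝ) {C : ι → ℝ}
    (hf : ∀ s ∈ A, Nice (C s) (f s)) {g : ℝ → ℝ} {Cg : ℝ} (hg : Nice Cg g) :
    Dq W (fun x => ∑ s ∈ A, f s x) g = ∑ s ∈ A, Dq W (f s) g := by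
  unfold Dq
  rw [← integral_finset_sum]
  · congr 1; ext x; rw [Finset.sum_mul]
  · intro s hs
    exact Dq_integrand_int hWm hM (hf s hs) hg

/-- Finset-sum linearity in the right slot. -/
lemma Dq_sum_right (hWm : Measurable (Function.uncurry W)) (hM : ∀ x y, |W x y| ≤ M) {ι : Type*} (A : Finset ι) (g : ι → ℝ → ℝ) {C : ι → ℝ}
    (hg : ∀ s ∈ A, Nice (C s) (g s)) {f : ℝ → ℝ} {Cf : ℝ} (hf : Nice Cf f) :
    Dq W f (fun y => ∑ s ∈ A, g s y) = ∑ s ∈ A, Dq W f (g s) := by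
  have hH : ∀ x, Hh W (fun y => ∑ s ∈ A, g s y) x = ∑ s ∈ A, Hh W (g s) x := by
    intro x
    unfold Hh
    rw [← integral_finset_sum]
    · congr 1; ext y; rw [Finset.sum_mul]
    · intro s hs; exact inner_int hWm hM (hg s hs) x
  unfold Dq
  calc (∫ x in I01, f x * Hh W (fun y => ∑ s ∈ A, g s y) x)
      = ∫ x in I01, ∑ s ∈ A, f x * Hh W (g s) x := by
        apply integral_congr_ae; filter_upwards with x
        rw [hH x, Finset.mul_sum]
    _ = ∑ s ∈ A, ∫ x in I01, f x * Hh W (g s) x := by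
        rw [integral_finset_sum]
        intro s hs; exact Dq_integrand_int hWm hM hf (hg s hs)

/-- scalar in the left slot. -/
lemma Dq_smul_left (c : ℝ) {f g : ℝ → ℝ} :
    Dq W (fun x => c * f x) g = c * Dq W f g := by
  unfold Dq
  rw [← integral_const_mul]
  congr 1; ext x; ring

/-- scalar in the right slot. -/
lemma Dq_smul_right (c : ℝ) {f g : ℝ → ℝ} :
    Dq W f (fun y => c * g y) = c * Dq W f g := by
  have hH : ∀ x, Hh W (fun y => c * g y) x = c * Hh W g x := by
    intro x; unfold Hh
    rw [← integral_const_mul]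
    congr 1; ext y; ring
  unfold Dq
  rw [← integral_const_mul]
  apply integral_congr_ae; filter_upwards with x
  rw [hH x]; ring


variable {q : ℕ} {J : Matrix (Fin q) (Fin q) ℝ}

lemma rho_nice (ρ : FracPartition q) (i : Fin q) : Nice 1 (ρ.toFun i) := by
  refine ⟨ρ.measurable i, fun x hx => ?_⟩
  have h := ρ.mem_I01 i x hx
  rw [abs_le]
  exact ⟨by linarith [h.1], h.2⟩

lemma energy_eq_Dq (W : ℝ → ℝ → ℝ) (J : Matrix (Fin q) (Fin q) ℝ) (ρ : FracPartition q) :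
    energy W J ρ = - ∑ i, ∑ j, J i j * Dq W (ρ.toFun i) (ρ.toFun j) := by
  unfold energy
  congr 1
  apply Finset.sum_congr rfl; intro i _
  apply Finset.sum_congr rfl; intro j _
  rw [double_eq_Dq]

lemma energy_abs_le (hWm : Measurable (Function.uncurry W)) (hM : ∀ x y, |W x y| ≤ M)
    (ρ : FracPartition q) :
    |energy W J ρ| ≤ (∑ i, ∑ j, |J i j|) * M := by
  rw [energy_eq_Dq, abs_neg]
  calc |∑ i, ∑ j, J i j * Dq W (ρ.toFun i) (ρ.toFun j)|
      ≤ ∑ i, ∑ j, |J i j * Dq W (ρ.toFun i) (ρ.toFun j)| := by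
        apply le_trans (Finset.abs_sum_le_sum_abs _ _)
        apply Finset.sum_le_sum; intro i _
        exact Finset.abs_sum_le_sum_abs _ _
    _ ≤ ∑ i, ∑ j, |J i j| * M := by
        apply Finset.sum_le_sum; intro i _
        apply Finset.sum_le_sum; intro j _
        rw [abs_mul]
        apply mul_le_mul_of_nonneg_left _ (abs_nonneg _)
        simpa using Dq_bound hWm hM (rho_nice ρ i) (rho_nice ρ j)
    _ = (∑ i, ∑ j, |J i j|) * M := by rw [Finset.sum_mul]; congr 1; ext i; rw [Finset.sum_mul]

lemma energy_diff_le (hWm : Measurable (Function.uncurry W)) (hM : ∀ x y, |W x y| ≤ M)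
    (ρ σ : FracPartition q) {t : ℝ}
    (ht : ∀ i, (∫ x in I01, |ρ.toFun i x - σ.toFun i x|) ≤ t) (hM0 : 0 ≤ M) :
    |energy W J ρ - energy W J σ| ≤ (∑ i, ∑ j, |J i j|) * (2 * M * t) := by
  rw [energy_eq_Dq, energy_eq_Dq]
  have : - (∑ i, ∑ j, J i j * Dq W (ρ.toFun i) (ρ.toFun j))
       - - (∑ i, ∑ j, J i j * Dq W (σ.toFun i) (σ.toFun j))
       = - ∑ i, ∑ j, J i j * (Dq W (ρ.toFun i) (ρ.toFun j) - Dq W (σ.toFun i) (σ.toFun j)) := by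
    simp only [mul_sub, Finset.sum_sub_distrib, neg_sub, neg_sub_neg]
  rw [this, abs_neg]
  calc |∑ i, ∑ j, J i j * (Dq W (ρ.toFun i) (ρ.toFun j) - Dq W (σ.toFun i) (σ.toFun j))|
      ≤ ∑ i, ∑ j, |J i j * (Dq W (ρ.toFun i) (ρ.toFun j) - Dq W (σ.toFun i) (σ.toFun j))| := by
        apply le_trans (Finset.abs_sum_le_sum_abs _ _)
        apply Finset.sum_le_sum; intro i _
        exact Finset.abs_sum_le_sum_abs _ _
    _ ≤ ∑ i, ∑ j, |J i j| * (2 * M * t) := by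
        apply Finset.sum_le_sum; intro i _
        apply Finset.sum_le_sum; intro j _
        rw [abs_mul]
        apply mul_le_mul_of_nonneg_left _ (abs_nonneg _)
        calc |Dq W (ρ.toFun i) (ρ.toFun j) - Dq W (σ.toFun i) (σ.toFun j)|
            ≤ M * (∫ x in I01, |ρ.toFun i x - σ.toFun i x|)
              + M * (∫ y in I01, |ρ.toFun j y - σ.toFun j y|) :=
              Dq_diff hWm hM (rho_nice ρ i) (rho_nice σ i) (rho_nice ρ j) (rho_nice σ j)
          _ ≤ M * t + M * t :=
              add_le_add (mul_le_mul_of_nonneg_left (ht i) hM0)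
                (mul_le_mul_of_nonneg_left (ht j) hM0)
          _ = 2 * M * t := by ring
    _ = (∑ i, ∑ j, |J i j|) * (2 * M * t) := by
        rw [Finset.sum_mul]; congr 1; ext i; rw [Finset.sum_mul]

/-- the constant partition with marginals `a`. -/
def constPart (a : Fin q → ℝ) (ha : IsDist a) : FracPartition q where
  toFun i := fun _ => a i
  measurable i := measurable_const
  mem_I01 i x _ := by
    constructor
    · exact ha.1 i
    · calc a i ≤ ∑ j, a j := Finset.single_le_sum (fun j _ => ha.1 j) (Finset.mem_univ i)
        _ = 1 := ha.2
  sum_one x _ := ha.2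

lemma constPart_marginal (a : Fin q → ℝ) (ha : IsDist a) (i : Fin q) :
    (∫ x in I01, (constPart a ha).toFun i x) = a i := setIntegral_const' _

/-- the set of achievable energies. -/
def ES (W : ℝ → ℝ → ℝ) (J : Matrix (Fin q) (Fin q) ℝ) (a : Fin q → ℝ) : Set ℝ :=
  {e | ∃ ρ : FracPartition q, (∀ i, (∫ x in I01, ρ.toFun i x) = a i) ∧ e = energy W J ρ}

lemma mgse_eq (W : ℝ → ℝ → ℝ) (J : Matrix (Fin q) (Fin q) ℝ) (a : Fin q → ℝ) :
    mgse W J a = sInf (ES W J a) := rfl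

lemma ES_nonempty (W : ℝ → ℝ → ℝ) (J : Matrix (Fin q) (Fin q) ℝ) {a : Fin q → ℝ}
    (ha : IsDist a) : (ES W J a).Nonempty :=
  ⟨energy W J (constPart a ha), constPart a ha, constPart_marginal a ha, rfl⟩

lemma ES_bddBelow (hWm : Measurable (Function.uncurry W)) (hM : ∀ x y, |W x y| ≤ M)
    (J : Matrix (Fin q) (Fin q) ℝ) (a : Fin q → ℝ) :
    BddBelow (ES W J a) := by
  refine ⟨-((∑ i, ∑ j, |J i j|) * M), ?_⟩
  rintro e ⟨ρ, -, rfl⟩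
  exact neg_le_of_abs_le (energy_abs_le hWm hM ρ)

lemma mgse_le (hWm : Measurable (Function.uncurry W)) (hM : ∀ x y, |W x y| ≤ M)
    {J : Matrix (Fin q) (Fin q) ℝ} {a : Fin q → ℝ} (ρ : FracPartition q)
    (hρ : ∀ i, (∫ x in I01, ρ.toFun i x) = a i) :
    mgse W J a ≤ energy W J ρ :=
  csInf_le (ES_bddBelow hWm hM J a) ⟨ρ, hρ, rfl⟩

lemma le_mgse {a : Fin q → ℝ} (ha : IsDist a) {c : ℝ}
    (h : ∀ ρ : FracPartition q, (∀ i, (∫ x in I01, ρ.toFun i x) = a i) → c ≤ energy W J ρ) :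
    c ≤ mgse W J a := by
  apply le_csInf (ES_nonempty W J ha)
  rintro e ⟨ρ, hρ, rfl⟩
  exact h ρ hρ


section Lip

variable {a a' : Fin q → ℝ}

lemma exists_transfer (hWm : Measurable (Function.uncurry W))
    (ha : IsDist a) (ha' : IsDist a') (ρ : FracPartition q)
    (hρ : ∀ i, (∫ x in I01, ρ.toFun i x) = a i) :
    ∃ ρ' : FracPartition q, (∀ i, (∫ x in I01, ρ'.toFun i x) = a' i) ∧
      ∀ i, (∫ x in I01, |ρ'.toFun i x - ρ.toFun i x|) ≤ |a i - a' i| := by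
  classical
  set c : Fin q → ℝ := fun i => if a i = 0 then 1 else min 1 (a' i / a i) with hc
  have hc0 : ∀ i, 0 ≤ c i := by
    intro i; rw [hc]; dsimp only; split
    · exact zero_le_one
    · exact le_min zero_le_one (div_nonneg (ha'.1 i) (ha.1 i))
  have hc1 : ∀ i, c i ≤ 1 := by
    intro i; rw [hc]; dsimp only; split
    · exact le_refl 1
    · exact min_le_left _ _
  have hcm : ∀ i, c i * a i = min (a i) (a' i) := by
    intro i; rw [hc]; dsimp only; split
    · rename_i h
      rw [h, mul_zero, min_comm, min_eq_right (ha'.1 i)]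
    · rename_i h
      have hpos : 0 < a i := lt_of_le_of_ne (ha.1 i) (Ne.symm h)
      rcases le_total (a' i / a i) 1 with hle | hle
      · rw [min_eq_right hle, div_mul_cancel₀ _ (ne_of_gt hpos),
          min_eq_right ((div_le_one hpos).mp hle)]
      · rw [min_eq_left hle, one_mul, min_eq_left ((one_le_div hpos).mp hle)]
  set d : ℝ := ∑ i, (a i - c i * a i) with hd
  have hd' : ∑ i, (a' i - c i * a i) = d := by
    rw [hd, Finset.sum_sub_distrib, Finset.sum_sub_distrib, ha.2, ha'.2]
  have hterm0 : ∀ i, 0 ≤ a i - c i * a i := by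
    intro i; rw [hcm i]; simp [min_le_left]
  have hterm0' : ∀ i, 0 ≤ a' i - c i * a i := by
    intro i; rw [hcm i]; simp [min_le_right]
  have hd0 : 0 ≤ d := Finset.sum_nonneg fun i _ => hterm0 i
  set e : Fin q → ℝ := fun i => if d = 0 then a' i else (a' i - c i * a i) / d with he
  have he0 : ∀ i, 0 ≤ e i := by
    intro i; rw [he]; dsimp only; split
    · exact ha'.1 i
    · exact div_nonneg (hterm0' i) hd0
  have hes : ∑ i, e i = 1 := by
    rw [he]; dsimp only; split
    · exact ha'.2
    · rename_i h
      rw [← Finset.sum_div, hd', div_self h]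
  have hed : ∀ i, e i * d = a' i - c i * a i := by
    intro i; rw [he]; dsimp only; split
    · rename_i h
      rw [h, mul_zero]
      symm
      have := Finset.sum_eq_zero_iff_of_nonneg
        (s := Finset.univ) (f := fun j => a' j - c j * a j) (fun j _ => hterm0' j)
      rw [hd', h] at this
      exact (this.mp rfl) i (Finset.mem_univ i)
    · rename_i h
      rw [div_mul_cancel₀ _ h]
  set T : ℝ → ℝ := fun x => ∑ j, (1 - c j) * ρ.toFun j x with hT
  have hTmeas : Measurable T := by
    apply Finset.measurable_sum
    intro j _
    exact (ρ.measurable j).const_mul _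
  have hT0 : ∀ x ∈ I01, 0 ≤ T x := by
    intro x hx
    apply Finset.sum_nonneg
    intro j _
    exact mul_nonneg (by linarith [hc1 j]) (ρ.mem_I01 j x hx).1
  have hTbd : ∀ x ∈ I01, T x ≤ (q : ℝ) := by
    intro x hx
    calc T x ≤ ∑ _j : Fin q, (1 : ℝ) := by
          apply Finset.sum_le_sum
          intro j _
          calc (1 - c j) * ρ.toFun j x ≤ 1 * 1 :=
                mul_le_mul (by linarith [hc0 j]) (ρ.mem_I01 j x hx).2
                  (ρ.mem_I01 j x hx).1 zero_le_one
            _ = 1 := one_mul 1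
      _ = (q : ℝ) := by simp
  have hTint : (∫ x in I01, T x) = d := by
    rw [hT]
    rw [integral_finset_sum _ (fun j _ => ?_)]
    · rw [hd]
      apply Finset.sum_congr rfl
      intro j _
      rw [integral_const_mul, hρ j]
      ring
    · apply intOn ((ρ.measurable j).const_mul _) (C := 1 * 1)
      intro x hx
      rw [abs_mul]
      apply mul_le_mul _ _ (abs_nonneg _) zero_le_one
      · rw [abs_le]; constructor <;> linarith [hc0 j, hc1 j]
      · rw [abs_le]; constructor <;> [linarith [(ρ.mem_I01 j x hx).1]; exact (ρ.mem_I01 j x hx).2]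
  set ρ' : FracPartition q :=
    { toFun := fun i x => c i * ρ.toFun i x + e i * T x
      measurable := fun i => ((ρ.measurable i).const_mul _).add (hTmeas.const_mul _)
      mem_I01 := by
        intro i x hx
        have hsum : ∑ j, (c j * ρ.toFun j x + e j * T x) = 1 := by
          rw [Finset.sum_add_distrib, ← Finset.sum_mul, hes, one_mul, hT,
            ← Finset.sum_add_distrib]
          rw [show ∑ j, (c j * ρ.toFun j x + (1 - c j) * ρ.toFun j x) = ∑ j, ρ.toFun j x by
            apply Finset.sum_congr rfl; intro j _; ring]
          exact ρ.sum_one x hx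
        have hnn : ∀ j, 0 ≤ c j * ρ.toFun j x + e j * T x := fun j =>
          add_nonneg (mul_nonneg (hc0 j) (ρ.mem_I01 j x hx).1)
            (mul_nonneg (he0 j) (hT0 x hx))
        constructor
        · exact hnn i
        · calc c i * ρ.toFun i x + e i * T x
              ≤ ∑ j, (c j * ρ.toFun j x + e j * T x) :=
                Finset.single_le_sum (fun j _ => hnn j) (Finset.mem_univ i)
            _ = 1 := hsum
      sum_one := by
        intro x hx
        rw [Finset.sum_add_distrib, ← Finset.sum_mul, hes, one_mul, hT,
          ← Finset.sum_add_distrib]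
        rw [show ∑ j, (c j * ρ.toFun j x + (1 - c j) * ρ.toFun j x) = ∑ j, ρ.toFun j x by
          apply Finset.sum_congr rfl; intro j _; ring]
        exact ρ.sum_one x hx } with hρ'
  have hint1 : ∀ i, IntegrableOn (fun x => c i * ρ.toFun i x) I01 := by
    intro i
    apply intOn ((ρ.measurable i).const_mul _) (C := 1)
    intro x hx
    rw [abs_mul]
    calc |c i| * |ρ.toFun i x| ≤ 1 * 1 := by
          apply mul_le_mul _ _ (abs_nonneg _) zero_le_one
          · rw [abs_le]; constructor <;> linarith [hc0 i, hc1 i]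
          · exact (rho_nice ρ i).2 x hx
      _ = 1 := one_mul 1
  have hint2 : ∀ i, IntegrableOn (fun x => e i * T x) I01 := by
    intro i
    apply intOn (hTmeas.const_mul _) (C := |e i| * q)
    intro x hx
    rw [abs_mul]
    apply mul_le_mul_of_nonneg_left _ (abs_nonneg _)
    rw [abs_le]
    exact ⟨by linarith [hT0 x hx, Nat.cast_nonneg (α := ℝ) q], hTbd x hx⟩
  have hmarg : ∀ i, (∫ x in I01, ρ'.toFun i x) = a' i := by
    intro i
    show (∫ x in I01, (c i * ρ.toFun i x + e i * T x)) = a' i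
    rw [integral_add (hint1 i) (hint2 i), integral_const_mul, integral_const_mul, hρ i, hTint,
      hed i]
    ring
  refine ⟨ρ', hmarg, ?_⟩
  intro i
  have hdiffbd : ∀ x ∈ I01, |ρ'.toFun i x - ρ.toFun i x| ≤
      (1 - c i) * ρ.toFun i x + e i * T x := by
    intro x hx
    have : ρ'.toFun i x - ρ.toFun i x = -((1 - c i) * ρ.toFun i x) + e i * T x := by
      show c i * ρ.toFun i x + e i * T x - ρ.toFun i x = _
      ring
    rw [this]
    calc |-((1 - c i) * ρ.toFun i x) + e i * T x|
        ≤ |-((1 - c i) * ρ.toFun i x)| + |e i * T x| := abs_add_le _ _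
      _ = (1 - c i) * ρ.toFun i x + e i * T x := by
          rw [abs_neg, abs_of_nonneg (mul_nonneg (by linarith [hc1 i]) (ρ.mem_I01 i x hx).1),
            abs_of_nonneg (mul_nonneg (he0 i) (hT0 x hx))]
  have hgint : IntegrableOn (fun x => (1 - c i) * ρ.toFun i x + e i * T x) I01 := by
    apply Integrable.add _ (hint2 i)
    apply intOn ((ρ.measurable i).const_mul _) (C := 1)
    intro x hx
    rw [abs_mul]
    calc |1 - c i| * |ρ.toFun i x| ≤ 1 * 1 := by
          apply mul_le_mul _ ((rho_nice ρ i).2 x hx) (abs_nonneg _) zero_le_one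
          rw [abs_le]; constructor <;> linarith [hc0 i, hc1 i]
      _ = 1 := one_mul 1
  have habsint : IntegrableOn (fun x => |ρ'.toFun i x - ρ.toFun i x|) I01 := by
    apply intOn ((ρ'.measurable i).sub (ρ.measurable i)).abs (C := 2)
    intro x hx
    rw [abs_abs]
    calc |ρ'.toFun i x - ρ.toFun i x| ≤ |ρ'.toFun i x| + |ρ.toFun i x| := abs_sub _ _
      _ ≤ 1 + 1 := add_le_add ((rho_nice ρ' i).2 x hx) ((rho_nice ρ i).2 x hx)
      _ = 2 := by norm_num
  calc (∫ x in I01, |ρ'.toFun i x - ρ.toFun i x|)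
      ≤ ∫ x in I01, ((1 - c i) * ρ.toFun i x + e i * T x) :=
        setIntegral_mono_on habsint hgint measI01 hdiffbd
    _ = (1 - c i) * a i + e i * d := by
        rw [integral_add _ (hint2 i), integral_const_mul, integral_const_mul, hρ i, hTint]
        apply intOn ((ρ.measurable i).const_mul _) (C := 1)
        intro x hx
        rw [abs_mul]
        calc |1 - c i| * |ρ.toFun i x| ≤ 1 * 1 := by
              apply mul_le_mul _ ((rho_nice ρ i).2 x hx) (abs_nonneg _) zero_le_one
              rw [abs_le]; constructor <;> linarith [hc0 i, hc1 i]
          _ = 1 := one_mul 1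
    _ ≤ |a i - a' i| := by
        rw [hed i]
        have := hcm i
        rcases le_total (a i) (a' i) with h | h
        · rw [min_eq_left h] at this
          rw [abs_of_nonpos (by linarith)]
          nlinarith [ha.1 i]
        · rw [min_eq_right h] at this
          rw [abs_of_nonneg (by linarith)]
          nlinarith [ha.1 i]


lemma mgse_transfer_le (hWm : Measurable (Function.uncurry W)) (hM : ∀ x y, |W x y| ≤ M)
    (hM0 : 0 ≤ M) {J : Matrix (Fin q) (Fin q) ℝ} (ha : IsDist a) (ha' : IsDist a') :
    mgse W J a' ≤ mgse W J a +
      (∑ i, ∑ j, |J i j|) * (2 * M * ∑ i, |a i - a' i|) := by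
  set s : ℝ := ∑ i, |a i - a' i| with hs
  have hle : mgse W J a' - (∑ i, ∑ j, |J i j|) * (2 * M * s) ≤ mgse W J a := by
    apply le_mgse ha
    intro ρ hρ
    obtain ⟨ρ', hmarg, hdiff⟩ := exists_transfer hWm ha ha' ρ hρ
    have h1 : mgse W J a' ≤ energy W J ρ' := mgse_le hWm hM ρ' hmarg
    have h2 : |energy W J ρ' - energy W J ρ| ≤ (∑ i, ∑ j, |J i j|) * (2 * M * s) := by
      apply energy_diff_le (t := s) hWm hM ρ' ρ _ hM0
      intro i
      have h3 : (∫ x in I01, |ρ'.toFun i x - ρ.toFun i x|) ≤ |a i - a' i| := hdiff i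
      refine le_trans h3 ?_
      rw [hs]
      exact Finset.single_le_sum (f := fun j => |a j - a' j|)
        (fun j _ => abs_nonneg _) (Finset.mem_univ i)
    have := (abs_le.mp h2).2
    linarith
  linarith

lemma mgse_lip (hWm : Measurable (Function.uncurry W)) (hM : ∀ x y, |W x y| ≤ M)
    (hM0 : 0 ≤ M) {J : Matrix (Fin q) (Fin q) ℝ} (ha : IsDist a) (ha' : IsDist a') :
    |mgse W J a - mgse W J a'| ≤
      (∑ i, ∑ j, |J i j|) * (2 * M * ∑ i, |a i - a' i|) := by
  rw [abs_sub_le_iff]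
  constructor
  · have h := mgse_transfer_le hWm hM hM0 (J := J) ha' ha
    have hsym : ∑ i, |a' i - a i| = ∑ i, |a i - a' i| := by
      apply Finset.sum_congr rfl; intro i _; exact abs_sub_comm _ _
    rw [hsym] at h
    linarith
  · have h := mgse_transfer_le hWm hM hM0 (J := J) ha ha'
    linarith

end Lip


section Blowup

variable (k : Fin q → ℕ)

/-- identification of `Fin (∑ k i)` with the sigma type. -/
def sigE : (Σ i : Fin q, Fin (k i)) ≃ Fin (∑ i, k i) :=
  Fintype.equivFinOfCardEq (by simp)

/-- the blown-up matrix. -/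
def Jblow (J : Matrix (Fin q) (Fin q) ℝ) :
    Matrix (Fin (∑ i, k i)) (Fin (∑ i, k i)) ℝ :=
  fun s t => J ((sigE k).symm s).1 ((sigE k).symm t).1

lemma Jblow_symm {J : Matrix (Fin q) (Fin q) ℝ} (hJ : J.IsSymm) :
    (Jblow k J).IsSymm := by
  ext s t
  show Jblow k J t s = Jblow k J s t
  exact hJ.apply _ _

/-- reindexing sums over `Fin (∑ k i)`. -/
lemma sum_sigE (F : Fin (∑ i, k i) → ℝ) :
    ∑ s, F s = ∑ i, ∑ t : Fin (k i), F (sigE k ⟨i, t⟩) := by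
  rw [← Equiv.sum_comp (sigE k) F, ← Finset.univ_sigma_univ, Finset.sum_sigma]

/-- grouping a partition of `Fin (∑ k i)` into a partition of `Fin q`. -/
def groupPart (σ : FracPartition (∑ i, k i)) : FracPartition q where
  toFun i := fun x => ∑ t : Fin (k i), σ.toFun (sigE k ⟨i, t⟩) x
  measurable i := Finset.measurable_sum _ (fun t _ => σ.measurable _)
  mem_I01 := by
    intro i x hx
    have hnn : ∀ j, 0 ≤ ∑ t : Fin (k j), σ.toFun (sigE k ⟨j, t⟩) x := fun j =>
      Finset.sum_nonneg fun t _ => (σ.mem_I01 _ x hx).1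
    have hsum : ∑ j, ∑ t : Fin (k j), σ.toFun (sigE k ⟨j, t⟩) x = 1 := by
      rw [← sum_sigE k (fun s => σ.toFun s x)]
      exact σ.sum_one x hx
    refine ⟨hnn i, ?_⟩
    rw [← hsum]
    exact Finset.single_le_sum (fun j _ => hnn j) (Finset.mem_univ i)
  sum_one := by
    intro x hx
    rw [← sum_sigE k (fun s => σ.toFun s x)]
    exact σ.sum_one x hx

lemma groupPart_marginal (σ : FracPartition (∑ i, k i))
    (hσ : ∀ s, (∫ x in I01, σ.toFun s x) = ((∑ i, k i : ℕ) : ℝ)⁻¹) (i : Fin q) :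
    (∫ x in I01, (groupPart k σ).toFun i x) = (k i : ℝ) / ((∑ i, k i : ℕ) : ℝ) := by
  show (∫ x in I01, ∑ t : Fin (k i), σ.toFun (sigE k ⟨i, t⟩) x) = _
  rw [integral_finset_sum _ (fun t _ => intOn (σ.measurable _) ((rho_nice σ _).2))]
  rw [Finset.sum_congr rfl (fun t _ => hσ (sigE k ⟨i, t⟩)), Finset.sum_const,
    Finset.card_univ, Fintype.card_fin, nsmul_eq_mul, div_eq_mul_inv]

lemma groupPart_energy (hWm : Measurable (Function.uncurry W)) (hM : ∀ x y, |W x y| ≤ M)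
    (J : Matrix (Fin q) (Fin q) ℝ) (σ : FracPartition (∑ i, k i)) :
    energy W J (groupPart k σ) = energy W (Jblow k J) σ := by
  rw [energy_eq_Dq, energy_eq_Dq]
  congr 1
  have hDq : ∀ i j, Dq W ((groupPart k σ).toFun i) ((groupPart k σ).toFun j)
      = ∑ t : Fin (k i), ∑ u : Fin (k j),
          Dq W (σ.toFun (sigE k ⟨i, t⟩)) (σ.toFun (sigE k ⟨j, u⟩)) := by
    intro i j
    show Dq W (fun x => ∑ t : Fin (k i), σ.toFun (sigE k ⟨i, t⟩) x)
        ((groupPart k σ).toFun j) = _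
    rw [Dq_sum_left hWm hM (C := fun _ => 1) Finset.univ _
      (fun t _ => rho_nice σ _) (rho_nice (groupPart k σ) j)]
    apply Finset.sum_congr rfl
    intro t _
    show Dq W _ (fun y => ∑ u : Fin (k j), σ.toFun (sigE k ⟨j, u⟩) y) = _
    rw [Dq_sum_right hWm hM (C := fun _ => 1) Finset.univ _
      (fun u _ => rho_nice σ _) (rho_nice σ _)]
  calc ∑ i, ∑ j, J i j * Dq W ((groupPart k σ).toFun i) ((groupPart k σ).toFun j)
      = ∑ i, ∑ j, ∑ t : Fin (k i), ∑ u : Fin (k j),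
          J i j * Dq W (σ.toFun (sigE k ⟨i, t⟩)) (σ.toFun (sigE k ⟨j, u⟩)) := by
        apply Finset.sum_congr rfl; intro i _
        apply Finset.sum_congr rfl; intro j _
        rw [hDq i j, Finset.mul_sum]
        apply Finset.sum_congr rfl; intro t _
        rw [Finset.mul_sum]
    _ = ∑ i, ∑ t : Fin (k i), ∑ j, ∑ u : Fin (k j),
          J i j * Dq W (σ.toFun (sigE k ⟨i, t⟩)) (σ.toFun (sigE k ⟨j, u⟩)) := by
        apply Finset.sum_congr rfl; intro i _
        exact Finset.sum_comm
    _ = ∑ s, ∑ s', Jblow k J s s' * Dq W (σ.toFun s) (σ.toFun s') := by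
        rw [sum_sigE k (fun s => ∑ s', Jblow k J s s' * Dq W (σ.toFun s) (σ.toFun s'))]
        apply Finset.sum_congr rfl; intro i _
        apply Finset.sum_congr rfl; intro t _
        rw [sum_sigE k (fun s' => Jblow k J (sigE k ⟨i, t⟩) s' *
          Dq W (σ.toFun (sigE k ⟨i, t⟩)) (σ.toFun s'))]
        apply Finset.sum_congr rfl; intro j _
        apply Finset.sum_congr rfl; intro u _
        have : Jblow k J (sigE k ⟨i, t⟩) (sigE k ⟨j, u⟩) = J i j := by
          simp [Jblow]
        rw [this]

lemma split_row (hk : ∀ i, 1 ≤ k i) (ρ : FracPartition q) (x : ℝ) (i : Fin q) :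
    ∑ t : Fin (k i), (k ((sigE k).symm (sigE k ⟨i, t⟩)).1 : ℝ)⁻¹ *
      ρ.toFun ((sigE k).symm (sigE k ⟨i, t⟩)).1 x = ρ.toFun i x := by
  rw [Finset.sum_congr rfl (fun t _ =>
    show (k ((sigE k).symm (sigE k ⟨i, t⟩)).1 : ℝ)⁻¹ *
        ρ.toFun ((sigE k).symm (sigE k ⟨i, t⟩)).1 x = (k i : ℝ)⁻¹ * ρ.toFun i x by
      rw [Equiv.symm_apply_apply])]
  rw [Finset.sum_const, Finset.card_univ, Fintype.card_fin, nsmul_eq_mul]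
  have : (k i : ℝ) ≠ 0 := Nat.cast_ne_zero.mpr (Nat.one_le_iff_ne_zero.mp (hk i))
  field_simp

/-- splitting a partition of `Fin q` into a partition of `Fin (∑ k i)`. -/
def splitPart (hk : ∀ i, 1 ≤ k i) (ρ : FracPartition q) : FracPartition (∑ i, k i) where
  toFun s := fun x => (k ((sigE k).symm s).1 : ℝ)⁻¹ * ρ.toFun ((sigE k).symm s).1 x
  measurable s := (ρ.measurable _).const_mul _
  mem_I01 := by
    intro s x hx
    have hnn : ∀ s', 0 ≤ (k ((sigE k).symm s').1 : ℝ)⁻¹ * ρ.toFun ((sigE k).symm s').1 x :=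
      fun s' => mul_nonneg (by positivity) (ρ.mem_I01 _ x hx).1
    have hsum : ∑ s', (k ((sigE k).symm s').1 : ℝ)⁻¹ * ρ.toFun ((sigE k).symm s').1 x = 1 := by
      rw [sum_sigE k, Finset.sum_congr rfl (fun i _ => split_row k hk ρ x i)]
      exact ρ.sum_one x hx
    refine ⟨hnn s, ?_⟩
    rw [← hsum]
    exact Finset.single_le_sum (fun s' _ => hnn s') (Finset.mem_univ s)
  sum_one := by
    intro x hx
    have hsum : ∑ s', (k ((sigE k).symm s').1 : ℝ)⁻¹ * ρ.toFun ((sigE k).symm s').1 x = 1 := by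
      rw [sum_sigE k, Finset.sum_congr rfl (fun i _ => split_row k hk ρ x i)]
      exact ρ.sum_one x hx
    exact hsum

lemma splitPart_marginal (hk : ∀ i, 1 ≤ k i) (ρ : FracPartition q)
    (hρ : ∀ i, (∫ x in I01, ρ.toFun i x) = (k i : ℝ) / ((∑ i, k i : ℕ) : ℝ))
    (s : Fin (∑ i, k i)) :
    (∫ x in I01, (splitPart k hk ρ).toFun s x) = ((∑ i, k i : ℕ) : ℝ)⁻¹ := by
  show (∫ x in I01, (k ((sigE k).symm s).1 : ℝ)⁻¹ * ρ.toFun ((sigE k).symm s).1 x) = _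
  rw [integral_const_mul, hρ]
  have : (k ((sigE k).symm s).1 : ℝ) ≠ 0 :=
    Nat.cast_ne_zero.mpr (Nat.one_le_iff_ne_zero.mp (hk _))
  field_simp

lemma splitPart_energy (hWm : Measurable (Function.uncurry W)) (hM : ∀ x y, |W x y| ≤ M)
    (hk : ∀ i, 1 ≤ k i) (J : Matrix (Fin q) (Fin q) ℝ) (ρ : FracPartition q) :
    energy W (Jblow k J) (splitPart k hk ρ) = energy W J ρ := by
  rw [energy_eq_Dq, energy_eq_Dq]
  congr 1
  have hDq : ∀ s s', Dq W ((splitPart k hk ρ).toFun s) ((splitPart k hk ρ).toFun s')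
      = (k ((sigE k).symm s).1 : ℝ)⁻¹ * ((k ((sigE k).symm s').1 : ℝ)⁻¹ *
          Dq W (ρ.toFun ((sigE k).symm s).1) (ρ.toFun ((sigE k).symm s').1)) := by
    intro s s'
    show Dq W (fun x => (k ((sigE k).symm s).1 : ℝ)⁻¹ * ρ.toFun ((sigE k).symm s).1 x)
        ((splitPart k hk ρ).toFun s') = _
    rw [Dq_smul_left]
    congr 1
    show Dq W _ (fun y => (k ((sigE k).symm s').1 : ℝ)⁻¹ * ρ.toFun ((sigE k).symm s').1 y) = _
    rw [Dq_smul_right]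
  calc ∑ s, ∑ s', Jblow k J s s' *
        Dq W ((splitPart k hk ρ).toFun s) ((splitPart k hk ρ).toFun s')
      = ∑ i, ∑ _t : Fin (k i), ∑ j, ∑ _u : Fin (k j),
          J i j * ((k i : ℝ)⁻¹ * ((k j : ℝ)⁻¹ * Dq W (ρ.toFun i) (ρ.toFun j))) := by
        rw [sum_sigE k]
        apply Finset.sum_congr rfl; intro i _
        apply Finset.sum_congr rfl; intro t _
        rw [sum_sigE k]
        apply Finset.sum_congr rfl; intro j _
        apply Finset.sum_congr rfl; intro u _
        rw [hDq]
        simp only [Jblow, Equiv.symm_apply_apply]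
    _ = ∑ i, ∑ j, J i j * Dq W (ρ.toFun i) (ρ.toFun j) := by
        apply Finset.sum_congr rfl; intro i _
        rw [Finset.sum_const, Finset.card_univ, Fintype.card_fin, nsmul_eq_mul,
          Finset.mul_sum]
        apply Finset.sum_congr rfl; intro j _
        rw [Finset.sum_const, Finset.card_univ, Fintype.card_fin, nsmul_eq_mul]
        have hi : (k i : ℝ) ≠ 0 := Nat.cast_ne_zero.mpr (Nat.one_le_iff_ne_zero.mp (hk i))
        have hj : (k j : ℝ) ≠ 0 := Nat.cast_ne_zero.mpr (Nat.one_le_iff_ne_zero.mp (hk j))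
        field_simp

lemma dist_rat (hq : 1 ≤ q) (hk : ∀ i, 1 ≤ k i) :
    IsDist (fun i => (k i : ℝ) / ((∑ i, k i : ℕ) : ℝ)) := by
  have hm : (0 : ℝ) < ((∑ i, k i : ℕ) : ℝ) := by
    have : 1 ≤ ∑ i, k i := by
      obtain ⟨i⟩ := Fin.pos_iff_nonempty.mp (Nat.lt_of_lt_of_le Nat.zero_lt_one hq)
      calc 1 ≤ k i := hk i
        _ ≤ ∑ j, k j := Finset.single_le_sum (fun j _ => Nat.zero_le _) (Finset.mem_univ i)
    exact_mod_cast Nat.lt_of_lt_of_le Nat.zero_lt_one this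
  constructor
  · intro i; positivity
  · rw [← Finset.sum_div, ← Nat.cast_sum, div_self (ne_of_gt hm)]

lemma dist_unif (m : ℕ) (hm : 1 ≤ m) : IsDist (fun _ : Fin m => (m : ℝ)⁻¹) := by
  have h0 : (m : ℝ) ≠ 0 := Nat.cast_ne_zero.mpr (Nat.one_le_iff_ne_zero.mp hm)
  constructor
  · intro i; positivity
  · rw [Finset.sum_const, Finset.card_univ, Fintype.card_fin, nsmul_eq_mul]
    field_simp

lemma blowup_eq (hWm : Measurable (Function.uncurry W)) (hM : ∀ x y, |W x y| ≤ M)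
    (hq : 1 ≤ q) (hk : ∀ i, 1 ≤ k i) (J : Matrix (Fin q) (Fin q) ℝ) :
    mgse W J (fun i => (k i : ℝ) / ((∑ i, k i : ℕ) : ℝ))
      = mgse W (Jblow k J) (fun _ => ((∑ i, k i : ℕ) : ℝ)⁻¹) := by
  have hm : 1 ≤ ∑ i, k i := by
    obtain ⟨i⟩ := Fin.pos_iff_nonempty.mp (Nat.lt_of_lt_of_le Nat.zero_lt_one hq)
    calc 1 ≤ k i := hk i
      _ ≤ ∑ j, k j := Finset.single_le_sum (fun j _ => Nat.zero_le _) (Finset.mem_univ i)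
  apply le_antisymm
  · apply le_mgse (dist_unif _ hm)
    intro σ hσ
    calc mgse W J (fun i => (k i : ℝ) / ((∑ i, k i : ℕ) : ℝ))
        ≤ energy W J (groupPart k σ) := mgse_le hWm hM _ (groupPart_marginal k σ hσ)
      _ = energy W (Jblow k J) σ := groupPart_energy k hWm hM J σ
  · apply le_mgse (dist_rat k hq hk)
    intro ρ hρ
    calc mgse W (Jblow k J) (fun _ => ((∑ i, k i : ℕ) : ℝ)⁻¹)
        ≤ energy W (Jblow k J) (splitPart k hk ρ) :=
          mgse_le hWm hM _ (splitPart_marginal k hk ρ hρ)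
      _ = energy W J ρ := splitPart_energy k hWm hM hk J ρ

end Blowup

end Aux5


theorem stmt5 (lo hi : ℝ) (W : ℕ → ℝ → ℝ → ℝ)
    (hW : ∀ n, IsGraphon (W n)) (hWI : ∀ n x y, W n x y ∈ Set.Icc lo hi)
    (hconv : ∀ q : ℕ, 1 ≤ q → ∀ J : Matrix (Fin q) (Fin q) ℝ, J.IsSymm →
      ∃ L : ℝ, Tendsto (fun n => mgse (W n) J (fun _ => (q : ℝ)⁻¹)) atTop (nhds L)) :
    ∀ q : ℕ, 1 ≤ q → ∀ a : Fin q → ℝ, IsDist a →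
      ∀ J : Matrix (Fin q) (Fin q) ℝ, J.IsSymm →
        ∃ L : ℝ, Tendsto (fun n => mgse (W n) J a) atTop (nhds L) := by
  intro q hq a ha J hJ
  set M : ℝ := max |lo| |hi| with hMdef
  have hM0 : 0 ≤ M := le_trans (abs_nonneg lo) (le_max_left _ _)
  have hM : ∀ n x y, |W n x y| ≤ M := by
    intro n x y
    obtain ⟨h1, h2⟩ := hWI n x y
    rw [abs_le]
    refine ⟨?_, ?_⟩
    · calc -M ≤ -|lo| := neg_le_neg (le_max_left _ _)
        _ ≤ lo := neg_abs_le lo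
        _ ≤ W n x y := h1
    · calc W n x y ≤ hi := h2
        _ ≤ |hi| := le_abs_self hi
        _ ≤ M := le_max_right _ _
  have hq0 : (0 : ℝ) < (q : ℝ) := by exact_mod_cast Nat.lt_of_lt_of_le Nat.zero_lt_one hq
  set K : ℝ := (∑ i, ∑ j, |J i j|) * (2 * M) with hKdef
  have hJsum0 : 0 ≤ ∑ i, ∑ j, |J i j| :=
    Finset.sum_nonneg fun i _ => Finset.sum_nonneg fun j _ => abs_nonneg _
  have hK0 : 0 ≤ K := mul_nonneg hJsum0 (by linarith)
  apply cauchySeq_tendsto_of_complete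
  rw [Metric.cauchySeq_iff]
  intro ε hε
  set δ : ℝ := ε / (4 * (K + 1)) with hδdef
  have hδ0 : 0 < δ := div_pos hε (by linarith)
  have hKδ : K * δ ≤ ε / 4 := by
    have h1 : (K + 1) * δ = ε / 4 := by
      rw [hδdef]
      field_simp
    calc K * δ ≤ (K + 1) * δ := mul_le_mul_of_nonneg_right (by linarith) hδ0.le
      _ = ε / 4 := h1
  obtain ⟨Nr, hNr⟩ := exists_nat_gt (4 * (q : ℝ) / δ)
  have hNrpos : (0 : ℝ) < Nr := by
    have h0 : 0 < 4 * (q : ℝ) / δ := div_pos (by linarith) hδ0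
    exact lt_trans h0 hNr
  set k : Fin q → ℕ := fun i => ⌈(Nr : ℝ) * a i⌉₊ + 1 with hkdef
  have hk : ∀ i, 1 ≤ k i := fun i => Nat.le_add_left 1 _
  set a' : Fin q → ℝ := fun i => (k i : ℝ) / ((∑ i, k i : ℕ) : ℝ) with ha'def
  have ha' : IsDist a' := Aux5.dist_rat k hq hk
  have hm1 : 1 ≤ ∑ i, k i := by
    obtain ⟨i⟩ := Fin.pos_iff_nonempty.mp (Nat.lt_of_lt_of_le Nat.zero_lt_one hq)
    calc 1 ≤ k i := hk i
      _ ≤ ∑ j, k j := Finset.single_le_sum (fun j _ => Nat.zero_le _) (Finset.mem_univ i)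
  have hki_lo : ∀ i, (Nr : ℝ) * a i + 1 ≤ (k i : ℝ) := by
    intro i
    simp only [hkdef]
    push_cast
    have := Nat.le_ceil ((Nr : ℝ) * a i)
    linarith
  have hki_hi : ∀ i, (k i : ℝ) ≤ (Nr : ℝ) * a i + 2 := by
    intro i
    simp only [hkdef]
    push_cast
    have h := Nat.ceil_lt_add_one (mul_nonneg (Nat.cast_nonneg Nr) (ha.1 i))
    linarith
  have hmcast : ((∑ i, k i : ℕ) : ℝ) = ∑ i, (k i : ℝ) := Nat.cast_sum _ _
  have hm_lo : (Nr : ℝ) + q ≤ ((∑ i, k i : ℕ) : ℝ) := by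
    rw [hmcast]
    calc (Nr : ℝ) + q = ∑ i, ((Nr : ℝ) * a i + 1) := by
          rw [Finset.sum_add_distrib, ← Finset.mul_sum, ha.2, mul_one, Finset.sum_const,
            Finset.card_univ, Fintype.card_fin, nsmul_eq_mul, mul_one]
      _ ≤ ∑ i, (k i : ℝ) := Finset.sum_le_sum fun i _ => hki_lo i
  have hm_hi : ((∑ i, k i : ℕ) : ℝ) ≤ (Nr : ℝ) + 2 * q := by
    rw [hmcast]
    calc ∑ i, (k i : ℝ) ≤ ∑ i, ((Nr : ℝ) * a i + 2) := Finset.sum_le_sum fun i _ => hki_hi i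
      _ = (Nr : ℝ) + 2 * q := by
          rw [Finset.sum_add_distrib, ← Finset.mul_sum, ha.2, mul_one, Finset.sum_const,
            Finset.card_univ, Fintype.card_fin, nsmul_eq_mul, mul_comm]
  have hm_pos : (0 : ℝ) < ((∑ i, k i : ℕ) : ℝ) := by linarith
  have hs : ∑ i, |a i - a' i| ≤ δ := by
    have hterm : ∀ i, |a i - a' i| ≤ (2 + 2 * q * a i) / ((∑ i, k i : ℕ) : ℝ) := by
      intro i
      have heq : a i - a' i =
          (((∑ i, k i : ℕ) : ℝ) * a i - k i) / ((∑ i, k i : ℕ) : ℝ) := by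
        simp only [ha'def]
        rw [sub_div, mul_comm, mul_div_assoc, div_self (ne_of_gt hm_pos), mul_one]
      rw [heq, abs_div, abs_of_pos hm_pos]
      gcongr
      rw [abs_le]
      constructor
      · have h1 := mul_le_mul_of_nonneg_right hm_lo (ha.1 i)
        have h2 := hki_hi i
        nlinarith [ha.1 i]
      · have h1 := mul_le_mul_of_nonneg_right hm_hi (ha.1 i)
        have h2 := hki_lo i
        nlinarith [ha.1 i]
    have hsum : ∑ i, |a i - a' i| ≤ (4 * q) / ((∑ i, k i : ℕ) : ℝ) := by
      calc ∑ i, |a i - a' i| ≤ ∑ i, (2 + 2 * q * a i) / ((∑ i, k i : ℕ) : ℝ) :=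
            Finset.sum_le_sum fun i _ => hterm i
        _ = (∑ i, (2 + 2 * q * a i)) / ((∑ i, k i : ℕ) : ℝ) := by rw [Finset.sum_div]
        _ = (4 * q) / ((∑ i, k i : ℕ) : ℝ) := by
            congr 1
            rw [Finset.sum_add_distrib, Finset.sum_const, Finset.card_univ, Fintype.card_fin,
              nsmul_eq_mul]
            rw [show ∑ i, 2 * (q : ℝ) * a i = 2 * q * ∑ i, a i by rw [Finset.mul_sum]]
            rw [ha.2]
            ring
    refine le_trans hsum ?_
    have h4q : 4 * (q : ℝ) < δ * Nr := by
      have := (div_lt_iff₀ hδ0).mp hNr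
      linarith
    rw [div_le_iff₀ hm_pos]
    nlinarith
  have hlip : ∀ n, |mgse (W n) J a - mgse (W n) J a'| ≤ ε / 4 := by
    intro n
    have h := Aux5.mgse_lip (hW n).1 (hM n) hM0 (J := J) ha ha'
    have h2 : (∑ i, ∑ j, |J i j|) * (2 * M * ∑ i, |a i - a' i|) ≤ K * δ := by
      have heq : (∑ i, ∑ j, |J i j|) * (2 * M * ∑ i, |a i - a' i|)
          = K * ∑ i, |a i - a' i| := by rw [hKdef]; ring
      rw [heq]
      exact mul_le_mul_of_nonneg_left hs hK0
    linarith
  have hblow : ∀ n, mgse (W n) J a'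
      = mgse (W n) (Aux5.Jblow k J) (fun _ => ((∑ i, k i : ℕ) : ℝ)⁻¹) := fun n =>
    Aux5.blowup_eq k (hW n).1 (hM n) hq hk J
  obtain ⟨L, hL⟩ := hconv (∑ i, k i) hm1 (Aux5.Jblow k J) (Aux5.Jblow_symm k hJ)
  have hcau := hL.cauchySeq
  rw [Metric.cauchySeq_iff] at hcau
  obtain ⟨N, hN⟩ := hcau (ε / 2) (by linarith)
  refine ⟨N, fun p hp r hr => ?_⟩
  have hg := hN p hp r hr
  rw [Real.dist_eq] at hg ⊢
  rw [← hblow p, ← hblow r] at hg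
  have a1 := abs_le.mp (hlip p)
  have a2 := abs_le.mp (hlip r)
  have a3 := abs_lt.mp hg
  rw [abs_lt]
  constructor <;> linarith
end
end

section
/- Let U, W be graphons and φ a measure-preserving bijection of [0,1], with W^φ(x,y) = W(φ(x), φ(y)). Then for every q-fractional partition ρ and symmetric q×q matrix J, |E_ρ(U,J) − E_ρ(W^φ,J)| ≤ q²·‖J‖_∞·‖U − W^φ‖_□, where ‖·‖_□ is the cut norm. -/
open MeasureTheory Filter

noncomputable section

/-- The cut norm of a kernel on `[0,1]²`. -/
def cutNorm (W : ℝ → ℝ → ℝ) : ℝ :=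
  sSup {r | ∃ f g : ℝ → ℝ, Measurable f ∧ Measurable g ∧
    (∀ x, f x ∈ I01) ∧ (∀ x, g x ∈ I01) ∧
    r = |∫ x in I01, ∫ y in I01, W x y * f x * g y|}

/-- The cut distance between two graphons. -/
def cutDist (U W : ℝ → ℝ → ℝ) : ℝ :=
  sInf {r | ∃ φ : ℝ → ℝ, Measurable φ ∧ Set.BijOn φ I01 I01 ∧
    MeasurePreserving φ (volume.restrict I01) (volume.restrict I01) ∧
    r = cutNorm (fun x y => U x y - W (φ x) (φ y))}

theorem stmt6 (q : ℕ) (U W : ℝ → ℝ → ℝ) (hU : IsGraphon U) (hW : IsGraphon W)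
    (φ : ℝ → ℝ) (hφm : Measurable φ) (hφbij : Set.BijOn φ I01 I01)
    (hφmp : MeasurePreserving φ (volume.restrict I01) (volume.restrict I01))
    (J : Matrix (Fin q) (Fin q) ℝ) (hJ : J.IsSymm)
    (Jmax : ℝ) (hJb : ∀ i j, |J i j| ≤ Jmax)
    (ρ : FracPartition q) :
    |energy U J ρ - energy (fun x y => W (φ x) (φ y)) J ρ| ≤
      (q : ℝ) ^ 2 * Jmax * cutNorm (fun x y => U x y - W (φ x) (φ y)) := by
  obtain ⟨hUm, -, MU, hMU⟩ := hU
  obtain ⟨hWm, -, MW, hMW⟩ := hW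
  have hI : MeasurableSet I01 := measurableSet_Icc
  set D : ℝ → ℝ → ℝ := fun x y => U x y - W (φ x) (φ y) with hDdef
  set Wφ : ℝ → ℝ → ℝ := fun x y => W (φ x) (φ y) with hWφdef
  have hDxy : ∀ x y, D x y = U x y - Wφ x y := fun x y => by rw [hDdef, hWφdef]
  have hWφm : Measurable (Function.uncurry Wφ) := by
    have h : Function.uncurry Wφ
        = (Function.uncurry W) ∘ (fun p : ℝ × ℝ => (φ p.1, φ p.2)) := by
      funext p; simp [Function.uncurry, hWφdef]
    rw [h]
    exact hWm.comp ((hφm.comp measurable_fst).prodMk (hφm.comp measurable_snd))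
  have hDm : Measurable (Function.uncurry D) := by
    have h : Function.uncurry D
        = fun p : ℝ × ℝ => Function.uncurry U p - Function.uncurry Wφ p := by
      funext p; simp [Function.uncurry, hDxy]
    rw [h]; exact hUm.sub hWφm
  have hWφb : ∀ x y, |Wφ x y| ≤ MW := fun x y => by rw [hWφdef]; exact hMW _ _
  have hMU0 : 0 ≤ MU := le_trans (abs_nonneg _) (hMU 0 0)
  have hMW0 : 0 ≤ MW := le_trans (abs_nonneg _) (hWφb 0 0)
  have hDb : ∀ x y, |D x y| ≤ MU + MW := fun x y => by
    have h1 := hMU x y; have h2 := hWφb x y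
    rw [hDxy]
    calc |U x y - Wφ x y| ≤ |U x y| + |Wφ x y| := abs_sub _ _
      _ ≤ MU + MW := by linarith
  have hμuniv : (volume.restrict I01) Set.univ = 1 := by
    rw [Measure.restrict_apply_univ]
    simp [I01, Real.volume_Icc]
  haveI hfin : IsFiniteMeasure (volume.restrict I01) :=
    ⟨by rw [hμuniv]; exact ENNReal.one_lt_top⟩
  have hμcompl : (volume.restrict I01) I01ᶜ = 0 := by
    rw [Measure.restrict_apply hI.compl]; simp
  have haep : ∀ᵐ p : ℝ × ℝ ∂(volume.restrict I01).prod (volume.restrict I01),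
      p.1 ∈ I01 ∧ p.2 ∈ I01 := by
    have h0 : (volume.restrict I01).prod (volume.restrict I01)
        ((I01ᶜ ×ˢ (Set.univ : Set ℝ)) ∪ ((Set.univ : Set ℝ) ×ˢ I01ᶜ)) = 0 := by
      apply measure_union_null <;> rw [Measure.prod_prod] <;> simp [hμcompl]
    rw [ae_iff]
    refine measure_mono_null ?_ h0
    intro p hp
    simp only [Set.mem_setOf_eq, not_and_or] at hp
    rcases hp with h | h
    · exact Or.inl (Set.mem_prod.2 ⟨h, trivial⟩)
    · exact Or.inr (Set.mem_prod.2 ⟨trivial, h⟩)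
  have key : ∀ (V : ℝ → ℝ → ℝ), Measurable (Function.uncurry V) →
      ∀ M : ℝ, (∀ x y, |V x y| ≤ M) → ∀ i j : Fin q,
      Integrable (fun p : ℝ × ℝ => ρ.toFun i p.1 * ρ.toFun j p.2 * V p.1 p.2)
        ((volume.restrict I01).prod (volume.restrict I01)) := by
    intro V hVm M hM i j
    have hmeas : Measurable fun p : ℝ × ℝ => ρ.toFun i p.1 * ρ.toFun j p.2 * V p.1 p.2 :=
      (((ρ.measurable i).comp measurable_fst).mul
        ((ρ.measurable j).comp measurable_snd)).mul hVm
    refine Integrable.mono' (integrable_const M) hmeas.aestronglyMeasurable ?_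
    filter_upwards [haep] with p hp
    obtain ⟨h1, h2⟩ := hp
    have r1 := ρ.mem_I01 i p.1 h1
    have r2 := ρ.mem_I01 j p.2 h2
    simp only [I01, Set.mem_Icc] at r1 r2
    have hv := hM p.1 p.2
    rw [Real.norm_eq_abs, abs_mul, abs_mul, abs_of_nonneg r1.1, abs_of_nonneg r2.1]
    nlinarith [abs_nonneg (V p.1 p.2), mul_nonneg r1.1 r2.1,
      mul_le_mul r1.2 r2.2 r2.1 zero_le_one]
  have dint : ∀ (V : ℝ → ℝ → ℝ) (hVm : Measurable (Function.uncurry V))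
      (M : ℝ) (hM : ∀ x y, |V x y| ≤ M) (i j : Fin q),
      (∫ x in I01, ∫ y in I01, ρ.toFun i x * ρ.toFun j y * V x y)
        = ∫ p, ρ.toFun i p.1 * ρ.toFun j p.2 * V p.1 p.2
            ∂(volume.restrict I01).prod (volume.restrict I01) :=
    fun V hVm M hM i j => (integral_prod _ (key V hVm M hM i j)).symm
  have hAD : ∀ i j : Fin q,
      (∫ x in I01, ∫ y in I01, ρ.toFun i x * ρ.toFun j y * U x y)
      - (∫ x in I01, ∫ y in I01, ρ.toFun i x * ρ.toFun j y * Wφ x y)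
      = ∫ x in I01, ∫ y in I01, ρ.toFun i x * ρ.toFun j y * D x y := by
    intro i j
    rw [dint U hUm MU hMU i j, dint Wφ hWφm MW hWφb i j, dint D hDm (MU + MW) hDb i j,
      ← integral_sub (key U hUm MU hMU i j) (key Wφ hWφm MW hWφb i j)]
    congr 1; funext p; rw [hDxy]; ring
  have hBdd : BddAbove {r | ∃ f g : ℝ → ℝ, Measurable f ∧ Measurable g ∧
      (∀ x, f x ∈ I01) ∧ (∀ x, g x ∈ I01) ∧
      r = |∫ x in I01, ∫ y in I01, D x y * f x * g y|} := by
    refine ⟨MU + MW, ?_⟩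
    rintro r ⟨f, g, hf, hg, hf01, hg01, rfl⟩
    have inner : ∀ x, ‖∫ y in I01, D x y * f x * g y‖ ≤ MU + MW := by
      intro x
      have hb : ∀ᵐ y ∂(volume.restrict I01), ‖D x y * f x * g y‖ ≤ MU + MW := by
        filter_upwards with y
        have hd := hDb x y
        have hfx := hf01 x; have hgy := hg01 y
        simp only [I01, Set.mem_Icc] at hfx hgy
        rw [Real.norm_eq_abs, abs_mul, abs_mul, abs_of_nonneg hfx.1, abs_of_nonneg hgy.1]
        nlinarith [abs_nonneg (D x y), mul_nonneg hfx.1 hgy.1,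
          mul_le_mul hfx.2 hgy.2 hgy.1 zero_le_one]
      calc ‖∫ y in I01, D x y * f x * g y‖
          ≤ (MU + MW) * ((volume.restrict I01) Set.univ).toReal :=
            norm_integral_le_of_norm_le_const hb
        _ = MU + MW := by rw [hμuniv]; simp
    calc |∫ x in I01, ∫ y in I01, D x y * f x * g y|
        ≤ (MU + MW) * ((volume.restrict I01) Set.univ).toReal :=
          norm_integral_le_of_norm_le_const (Filter.Eventually.of_forall inner)
      _ = MU + MW := by rw [hμuniv]; simp
  have hcut : ∀ i j : Fin q,
      |∫ x in I01, ∫ y in I01, ρ.toFun i x * ρ.toFun j y * D x y| ≤ cutNorm D := by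
    intro i j
    set f : ℝ → ℝ := fun x => max 0 (min 1 (ρ.toFun i x)) with hf
    set g : ℝ → ℝ := fun x => max 0 (min 1 (ρ.toFun j x)) with hg
    have hfm : Measurable f := measurable_const.max (measurable_const.min (ρ.measurable i))
    have hgm : Measurable g := measurable_const.max (measurable_const.min (ρ.measurable j))
    have hfI : ∀ x, f x ∈ I01 := fun x =>
      Set.mem_Icc.2 ⟨le_max_left _ _, max_le (by norm_num) (min_le_left _ _)⟩
    have hgI : ∀ x, g x ∈ I01 := fun x =>
      Set.mem_Icc.2 ⟨le_max_left _ _, max_le (by norm_num) (min_le_left _ _)⟩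
    have heq : (∫ x in I01, ∫ y in I01, D x y * f x * g y)
        = ∫ x in I01, ∫ y in I01, ρ.toFun i x * ρ.toFun j y * D x y := by
      apply setIntegral_congr_fun hI
      intro x hx
      apply setIntegral_congr_fun hI
      intro y hy
      have hx' := ρ.mem_I01 i x hx
      have hy' := ρ.mem_I01 j y hy
      simp only [I01, Set.mem_Icc] at hx' hy'
      have hfx : f x = ρ.toFun i x := by
        rw [hf]; simp only []; rw [min_eq_right hx'.2, max_eq_right hx'.1]
      have hgy : g y = ρ.toFun j y := by
        rw [hg]; simp only []; rw [min_eq_right hy'.2, max_eq_right hy'.1]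
      simp only [hfx, hgy]; ring
    exact le_csSup hBdd ⟨f, g, hfm, hgm, hfI, hgI, by rw [heq]⟩
  have hE : energy U J ρ - energy Wφ J ρ
      = -∑ i, ∑ j, J i j * ∫ x in I01, ∫ y in I01, ρ.toFun i x * ρ.toFun j y * D x y := by
    have h : ∀ i j : Fin q,
        J i j * ∫ x in I01, ∫ y in I01, ρ.toFun i x * ρ.toFun j y * D x y
        = J i j * (∫ x in I01, ∫ y in I01, ρ.toFun i x * ρ.toFun j y * U x y)
          - J i j * (∫ x in I01, ∫ y in I01, ρ.toFun i x * ρ.toFun j y * Wφ x y) :=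
      fun i j => by rw [← hAD i j]; ring
    unfold energy
    simp only [h, Finset.sum_sub_distrib]
    ring
  rcases Nat.eq_zero_or_pos q with hq | hq
  · subst hq; simp [energy]
  have hJ0 : 0 ≤ Jmax := le_trans (abs_nonneg _) (hJb ⟨0, hq⟩ ⟨0, hq⟩)
  rw [hE, abs_neg]
  calc |∑ i, ∑ j, J i j * ∫ x in I01, ∫ y in I01, ρ.toFun i x * ρ.toFun j y * D x y|
      ≤ ∑ i, ∑ j, |J i j * ∫ x in I01, ∫ y in I01, ρ.toFun i x * ρ.toFun j y * D x y| :=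
        (Finset.abs_sum_le_sum_abs _ _).trans
          (Finset.sum_le_sum fun i _ => Finset.abs_sum_le_sum_abs _ _)
    _ ≤ ∑ _i : Fin q, ∑ _j : Fin q, Jmax * cutNorm D := by
        refine Finset.sum_le_sum fun i _ => Finset.sum_le_sum fun j _ => ?_
        rw [abs_mul]
        exact mul_le_mul (hJb i j) (hcut i j) (abs_nonneg _) hJ0
    _ = (q : ℝ) ^ 2 * Jmax * cutNorm D := by
        simp [Finset.sum_const, Finset.card_univ]; ring
end
end

section
/- Fix q ≥ 1, 0 ≤ c ≤ 1/q, and a symmetric q×q matrix J. The lower threshold ground state energy W ↦ E^c(W,J) = inf_{a ∈ A_c} E_a(W,J), where A_c is the set of probability distributions on [q] with all components at least c, is Lipschitz continuous with respect to the cut distance δ_□ on graphons: |E^c(U,J) − E^c(W,J)| ≤ q²·‖J‖_∞·δ_□(U,W). -/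
open MeasureTheory Filter

noncomputable section

namespace S8

open MeasureTheory Set Function

lemma measI : MeasurableSet I01 := measurableSet_Icc

lemma volI : volume I01 = 1 := by
  rw [I01, Real.volume_Icc]; norm_num

lemma volI_lt : volume I01 < ⊤ := by rw [volI]; exact ENNReal.one_lt_top

lemma absInt_le {f : ℝ → ℝ} {C : ℝ} (h : ∀ x ∈ I01, |f x| ≤ C) :
    |∫ x in I01, f x| ≤ C := by
  have := norm_setIntegral_le_of_norm_le_const (μ := volume) volI_lt
    (f := f) (C := C) (fun x hx => by simpa using h x hx)
  simpa [Real.norm_eq_abs, Measure.real, volI] using this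

lemma integrableOn_bdd {f : ℝ → ℝ} (hm : Measurable f) {C : ℝ}
    (h : ∀ x ∈ I01, |f x| ≤ C) : IntegrableOn f I01 := by
  refine Measure.integrableOn_of_bounded (M := C) (by rw [volI]; exact ENNReal.one_ne_top)
    hm.aestronglyMeasurable ?_
  exact (ae_restrict_iff' measI).2 (Filter.Eventually.of_forall (fun x hx => by
    simpa using h x hx))


section Comp

variable {φ : ℝ → ℝ} (hφm : Measurable φ)
  (hmp : MeasurePreserving φ (volume.restrict I01) (volume.restrict I01))

include hφm hmp in
lemma setIntegral_comp_mp {f : ℝ → ℝ} (hf : Measurable f) :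
    ∫ x in I01, f (φ x) = ∫ x in I01, f x := by
  have h1 : ∫ x in I01, f x
      = ∫ x, f x ∂(Measure.map φ (volume.restrict I01)) := by rw [hmp.map_eq]
  rw [h1, integral_map hφm.aemeasurable]
  rw [hmp.map_eq]
  exact hf.aestronglyMeasurable

include hφm hmp in
lemma double_comp {F : ℝ → ℝ → ℝ} (hF : Measurable (uncurry F)) :
    ∫ x in I01, ∫ y in I01, F (φ x) (φ y) = ∫ x in I01, ∫ y in I01, F x y := by
  have hinner : ∀ x : ℝ, ∫ y in I01, F (φ x) (φ y) = ∫ y in I01, F (φ x) y := by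
    intro x
    exact setIntegral_comp_mp hφm hmp (hF.comp (measurable_prodMk_left))
  simp only [hinner]
  exact setIntegral_comp_mp hφm hmp
    (hF.stronglyMeasurable.integral_prod_right (ν := volume.restrict I01)).measurable

end Comp

lemma exists_G {φ : ℝ → ℝ} (hφm : Measurable φ) (hbij : Set.BijOn φ I01 I01) :
    ∃ G : ℝ → ℝ, Measurable G ∧ (∀ x ∈ I01, G x ∈ I01) ∧
      (∀ x ∈ I01, G (φ x) = x) := by
  haveI : StandardBorelSpace I01 := measI.standardBorel
  let e : I01 ≃ I01 := Set.BijOn.equiv φ hbij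
  have heval : ∀ x : I01, (e x : ℝ) = φ x := fun x => rfl
  have hem : Measurable (e : I01 → I01) :=
    Measurable.subtype_mk (hφm.comp measurable_subtype_coe)
  have hemb : MeasurableEmbedding (e : I01 → I01) :=
    hem.measurableEmbedding e.injective
  have hsymm : Measurable (e.symm : I01 → I01) := by
    intro A hA
    have h2 : (e.symm : I01 → I01) ⁻¹' A = (e : I01 → I01) '' A := by
      ext x
      simp [Equiv.symm_apply_eq, eq_comm, Set.mem_image, Equiv.eq_symm_apply]
    rw [h2]
    exact hemb.measurableSet_image' hA
  classical
  refine ⟨fun x => if h : x ∈ I01 then (e.symm ⟨x, h⟩ : ℝ) else x, ?_, ?_, ?_⟩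
  · exact Measurable.dite (f := fun a : I01 => (e.symm a : ℝ))
      (g := fun a : {x : ℝ // ¬ x ∈ I01} => (a : ℝ))
      (measurable_subtype_coe.comp hsymm) measurable_subtype_coe measI
  · intro x hx
    simp only [dif_pos hx]
    exact (e.symm ⟨x, hx⟩).2
  · intro x hx
    have hmem : φ x ∈ I01 := hbij.mapsTo hx
    simp only [dif_pos hmem]
    have : (⟨φ x, hmem⟩ : I01) = e ⟨x, hx⟩ := by
      ext; exact (heval ⟨x, hx⟩).symm
    rw [this, Equiv.symm_apply_apply]


section Energy

variable {q : ℕ} {J : Matrix (Fin q) (Fin q) ℝ} {Jmax : ℝ}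

lemma rho_abs (ρ : FracPartition q) (i : Fin q) {x : ℝ} (hx : x ∈ I01) :
    |ρ.toFun i x| ≤ 1 := by
  have h := ρ.mem_I01 i x hx
  rw [I01, Set.mem_Icc] at h
  rw [abs_le]; constructor <;> linarith [h.1, h.2]

lemma measF {V : ℝ → ℝ → ℝ} (hV : Measurable (uncurry V)) (ρ : FracPartition q) (i j : Fin q) :
    Measurable (uncurry (fun x y => ρ.toFun i x * ρ.toFun j y * V x y)) :=
  (((ρ.measurable i).comp measurable_fst).mul
    ((ρ.measurable j).comp measurable_snd)).mul hV

lemma boundF {V : ℝ → ℝ → ℝ} {MV : ℝ} (hMV : ∀ x y, |V x y| ≤ MV)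
    (ρ : FracPartition q) (i j : Fin q) {x y : ℝ} (hx : x ∈ I01) (hy : y ∈ I01) :
    |ρ.toFun i x * ρ.toFun j y * V x y| ≤ MV := by
  have h1 := rho_abs ρ i hx
  have h2 := rho_abs ρ j hy
  have h3 := hMV x y
  have h4 := abs_nonneg (ρ.toFun i x)
  have h5 := abs_nonneg (ρ.toFun j y)
  have h6 := abs_nonneg (V x y)
  calc |ρ.toFun i x * ρ.toFun j y * V x y|
      = |ρ.toFun i x| * |ρ.toFun j y| * |V x y| := by rw [abs_mul, abs_mul]
    _ ≤ 1 * 1 * MV := by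
        apply mul_le_mul _ h3 h6 (by norm_num)
        nlinarith
    _ = MV := by ring

lemma absT_le {V : ℝ → ℝ → ℝ} {MV : ℝ} (hMV : ∀ x y, |V x y| ≤ MV)
    (ρ : FracPartition q) (i j : Fin q) :
    |∫ x in I01, ∫ y in I01, ρ.toFun i x * ρ.toFun j y * V x y| ≤ MV :=
  absInt_le (fun x hx => absInt_le (fun y hy => boundF hMV ρ i j hx hy))

lemma abs_energy_le (hJb : ∀ i j, |J i j| ≤ Jmax) (hJ0 : 0 ≤ Jmax)
    {V : ℝ → ℝ → ℝ} {MV : ℝ} (hMV : ∀ x y, |V x y| ≤ MV)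
    (ρ : FracPartition q) : |energy V J ρ| ≤ (q : ℝ) ^ 2 * Jmax * MV := by
  unfold energy
  rw [abs_neg]
  calc |∑ i, ∑ j, J i j * ∫ x in I01, ∫ y in I01, ρ.toFun i x * ρ.toFun j y * V x y|
      ≤ ∑ i, ∑ j, |J i j * ∫ x in I01, ∫ y in I01, ρ.toFun i x * ρ.toFun j y * V x y| := by
        apply le_trans (Finset.abs_sum_le_sum_abs _ _)
        exact Finset.sum_le_sum (fun i _ => Finset.abs_sum_le_sum_abs _ _)
    _ ≤ ∑ _i : Fin q, ∑ _j : Fin q, Jmax * MV := by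
        apply Finset.sum_le_sum; intro i _
        apply Finset.sum_le_sum; intro j _
        rw [abs_mul]
        exact mul_le_mul (hJb i j) (absT_le hMV ρ i j) (abs_nonneg _) hJ0
    _ = (q : ℝ) ^ 2 * Jmax * MV := by
        simp [Finset.sum_const, Finset.card_univ]
        ring

lemma intInner {V : ℝ → ℝ → ℝ} (hV : Measurable (uncurry V)) {MV : ℝ}
    (hMV : ∀ x y, |V x y| ≤ MV) (ρ : FracPartition q) (i j : Fin q)
    {x : ℝ} (hx : x ∈ I01) :
    IntegrableOn (fun y => ρ.toFun i x * ρ.toFun j y * V x y) I01 :=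
  integrableOn_bdd ((measF hV ρ i j).comp measurable_prodMk_left)
    (fun y hy => boundF hMV ρ i j hx hy)

lemma measInner {V : ℝ → ℝ → ℝ} (hV : Measurable (uncurry V)) (ρ : FracPartition q)
    (i j : Fin q) :
    Measurable (fun x => ∫ y in I01, ρ.toFun i x * ρ.toFun j y * V x y) :=
  ((measF hV ρ i j).stronglyMeasurable.integral_prod_right
    (ν := volume.restrict I01)).measurable

lemma intOuter {V : ℝ → ℝ → ℝ} (hV : Measurable (uncurry V)) {MV : ℝ}
    (hMV : ∀ x y, |V x y| ≤ MV) (ρ : FracPartition q) (i j : Fin q) :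
    IntegrableOn (fun x => ∫ y in I01, ρ.toFun i x * ρ.toFun j y * V x y) I01 :=
  integrableOn_bdd (measInner hV ρ i j)
    (fun x hx => absInt_le (fun y hy => boundF hMV ρ i j hx hy))

lemma energy_sub {U V : ℝ → ℝ → ℝ} (hU : Measurable (uncurry U))
    (hV : Measurable (uncurry V)) {MU MV : ℝ} (hMU : ∀ x y, |U x y| ≤ MU)
    (hMV : ∀ x y, |V x y| ≤ MV) (ρ : FracPartition q) :
    energy U J ρ - energy V J ρ =
      - ∑ i, ∑ j, J i j * ∫ x in I01, ∫ y in I01,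
        ρ.toFun i x * ρ.toFun j y * (U x y - V x y) := by
  have key : ∀ i j : Fin q,
      (∫ x in I01, ∫ y in I01, ρ.toFun i x * ρ.toFun j y * (U x y - V x y))
        = (∫ x in I01, ∫ y in I01, ρ.toFun i x * ρ.toFun j y * U x y)
          - ∫ x in I01, ∫ y in I01, ρ.toFun i x * ρ.toFun j y * V x y := by
    intro i j
    have h1 : Set.EqOn (fun x => ∫ y in I01, ρ.toFun i x * ρ.toFun j y * (U x y - V x y))
        (fun x => (∫ y in I01, ρ.toFun i x * ρ.toFun j y * U x y)
          - ∫ y in I01, ρ.toFun i x * ρ.toFun j y * V x y) I01 := by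
      intro x hx
      simp only
      rw [← integral_sub (intInner hU hMU ρ i j hx) (intInner hV hMV ρ i j hx)]
      congr 1
      ext y
      ring
    rw [setIntegral_congr_fun measI h1]
    exact integral_sub (intOuter hU hMU ρ i j) (intOuter hV hMV ρ i j)
  simp only [key]
  simp only [mul_sub, Finset.sum_sub_distrib]
  unfold energy
  ring

end Energy


section Cut

lemma mem_I01_abs {t : ℝ} (h : t ∈ I01) : |t| ≤ 1 := by
  rw [I01, Set.mem_Icc] at h
  rw [abs_le]; constructor <;> linarith [h.1, h.2]

lemma abs_mul3 {a b c M : ℝ} (ha : |a| ≤ M) (hb : |b| ≤ 1) (hc : |c| ≤ 1) :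
    |a * b * c| ≤ M := by
  have h1 := abs_nonneg a
  have h2 := abs_nonneg b
  have h3 := abs_nonneg c
  have hM : 0 ≤ M := le_trans h1 ha
  calc |a * b * c| = |a| * |b| * |c| := by rw [abs_mul, abs_mul]
    _ ≤ M * 1 * 1 := by
        apply mul_le_mul _ hc h3 (by nlinarith)
        exact mul_le_mul ha hb h2 hM
    _ = M := by ring

lemma cutNorm_bddAbove {D : ℝ → ℝ → ℝ} {MD : ℝ} (hMD : ∀ x y, |D x y| ≤ MD) :
    BddAbove {r | ∃ f g : ℝ → ℝ, Measurable f ∧ Measurable g ∧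
      (∀ x, f x ∈ I01) ∧ (∀ x, g x ∈ I01) ∧
      r = |∫ x in I01, ∫ y in I01, D x y * f x * g y|} := by
  refine ⟨MD, ?_⟩
  rintro r ⟨f, g, hf, hg, hfI, hgI, rfl⟩
  apply absInt_le
  intro x _
  apply absInt_le
  intro y _
  exact abs_mul3 (hMD x y) (mem_I01_abs (hfI x)) (mem_I01_abs (hgI y))

lemma zero_mem_I01 : (0 : ℝ) ∈ I01 := by rw [I01, Set.mem_Icc]; norm_num

lemma cutNorm_nonneg {D : ℝ → ℝ → ℝ} {MD : ℝ} (hMD : ∀ x y, |D x y| ≤ MD) :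
    0 ≤ cutNorm D := by
  apply le_csSup (cutNorm_bddAbove hMD)
  exact ⟨fun _ => 0, fun _ => 0, measurable_const, measurable_const,
    fun _ => zero_mem_I01, fun _ => zero_mem_I01, by simp⟩

lemma cutNorm_ge {q : ℕ} {D : ℝ → ℝ → ℝ} {MD : ℝ} (hMD : ∀ x y, |D x y| ≤ MD)
    (ρ : FracPartition q) (i j : Fin q) :
    |∫ x in I01, ∫ y in I01, ρ.toFun i x * ρ.toFun j y * D x y| ≤ cutNorm D := by
  set f := I01.indicator (ρ.toFun i) with hfdef
  set g := I01.indicator (ρ.toFun j) with hgdef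
  have hfI : ∀ x, f x ∈ I01 := by
    intro x
    by_cases hx : x ∈ I01
    · rw [hfdef, Set.indicator_of_mem hx]; exact ρ.mem_I01 i x hx
    · rw [hfdef, Set.indicator_of_notMem hx]; exact zero_mem_I01
  have hgI : ∀ x, g x ∈ I01 := by
    intro x
    by_cases hx : x ∈ I01
    · rw [hgdef, Set.indicator_of_mem hx]; exact ρ.mem_I01 j x hx
    · rw [hgdef, Set.indicator_of_notMem hx]; exact zero_mem_I01
  have heq : (∫ x in I01, ∫ y in I01, ρ.toFun i x * ρ.toFun j y * D x y)
      = ∫ x in I01, ∫ y in I01, D x y * f x * g y := by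
    apply setIntegral_congr_fun measI
    intro x hx
    apply setIntegral_congr_fun measI
    intro y hy
    simp only [hfdef, hgdef, Set.indicator_of_mem hx, Set.indicator_of_mem hy]
    ring
  rw [heq]
  exact le_csSup (cutNorm_bddAbove hMD)
    ⟨f, g, (ρ.measurable i).indicator measI, (ρ.measurable j).indicator measI,
      hfI, hgI, rfl⟩

lemma abs_energy_sub_le {q : ℕ} {J : Matrix (Fin q) (Fin q) ℝ} {Jmax : ℝ}
    (hJb : ∀ i j, |J i j| ≤ Jmax) (hJ0 : 0 ≤ Jmax)
    {U V : ℝ → ℝ → ℝ} (hUm : Measurable (uncurry U)) (hVm : Measurable (uncurry V))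
    {MU MV : ℝ} (hMU : ∀ x y, |U x y| ≤ MU) (hMV : ∀ x y, |V x y| ≤ MV)
    (ρ : FracPartition q) :
    |energy U J ρ - energy V J ρ| ≤
      (q : ℝ) ^ 2 * Jmax * cutNorm (fun x y => U x y - V x y) := by
  have hMD : ∀ x y, |U x y - V x y| ≤ MU + MV := fun x y =>
    le_trans (abs_sub _ _) (add_le_add (hMU x y) (hMV x y))
  rw [energy_sub hUm hVm hMU hMV ρ, abs_neg]
  calc |∑ i, ∑ j, J i j * ∫ x in I01, ∫ y in I01,
        ρ.toFun i x * ρ.toFun j y * (U x y - V x y)|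
      ≤ ∑ i, ∑ j, |J i j * ∫ x in I01, ∫ y in I01,
        ρ.toFun i x * ρ.toFun j y * (U x y - V x y)| := by
        apply le_trans (Finset.abs_sum_le_sum_abs _ _)
        exact Finset.sum_le_sum (fun i _ => Finset.abs_sum_le_sum_abs _ _)
    _ ≤ ∑ _i : Fin q, ∑ _j : Fin q, Jmax * cutNorm (fun x y => U x y - V x y) := by
        apply Finset.sum_le_sum; intro i _
        apply Finset.sum_le_sum; intro j _
        rw [abs_mul]
        exact mul_le_mul (hJb i j) (cutNorm_ge hMD ρ i j) (abs_nonneg _) hJ0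
    _ = (q : ℝ) ^ 2 * Jmax * cutNorm (fun x y => U x y - V x y) := by
        simp [Finset.sum_const, Finset.card_univ]
        ring

end Cut

lemma sInf_le_sInf_add {S T : Set ℝ} {c : ℝ} (hS : S.Nonempty) (hTb : BddBelow T)
    (h : ∀ e ∈ S, ∃ e' ∈ T, e' ≤ e + c) : sInf T ≤ sInf S + c := by
  have h2 : ∀ e ∈ S, sInf T - c ≤ e := by
    intro e he
    obtain ⟨e', he', hle⟩ := h e he
    have := csInf_le hTb he'
    linarith
  have := le_csInf hS h2
  linarith


section Mgse

variable {q : ℕ} {J : Matrix (Fin q) (Fin q) ℝ} {Jmax : ℝ}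

/-- The constant fractional partition associated to a distribution. -/
def constFP (a : Fin q → ℝ) (ha : IsDist a) : FracPartition q where
  toFun i := fun _ => a i
  measurable _ := measurable_const
  mem_I01 i x _ := by
    rw [I01, Set.mem_Icc]
    refine ⟨ha.1 i, ?_⟩
    calc a i ≤ ∑ j, a j := Finset.single_le_sum (fun j _ => ha.1 j) (Finset.mem_univ i)
      _ = 1 := ha.2
  sum_one _ _ := ha.2

lemma constFP_int (a : Fin q → ℝ) (ha : IsDist a) (i : Fin q) :
    (∫ x in I01, (constFP a ha).toFun i x) = a i := by
  simp [constFP, Measure.real, volI]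

lemma mgse_set_nonempty {V : ℝ → ℝ → ℝ} {a : Fin q → ℝ} (ha : IsDist a) :
    {e | ∃ ρ : FracPartition q, (∀ i, (∫ x in I01, ρ.toFun i x) = a i)
      ∧ e = energy V J ρ}.Nonempty :=
  ⟨energy V J (constFP a ha), constFP a ha, constFP_int a ha, rfl⟩

lemma mgse_set_bddBelow (hJb : ∀ i j, |J i j| ≤ Jmax) (hJ0 : 0 ≤ Jmax)
    {V : ℝ → ℝ → ℝ} {MV : ℝ} (hMV : ∀ x y, |V x y| ≤ MV) (a : Fin q → ℝ) :
    ∀ e ∈ {e | ∃ ρ : FracPartition q, (∀ i, (∫ x in I01, ρ.toFun i x) = a i)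
      ∧ e = energy V J ρ}, -((q : ℝ) ^ 2 * Jmax * MV) ≤ e := by
  rintro e ⟨ρ, _, rfl⟩
  have := abs_energy_le hJb hJ0 hMV ρ
  rw [abs_le] at this
  linarith [this.1]

lemma mgse_ge (hJb : ∀ i j, |J i j| ≤ Jmax) (hJ0 : 0 ≤ Jmax)
    {V : ℝ → ℝ → ℝ} {MV : ℝ} (hMV : ∀ x y, |V x y| ≤ MV)
    {a : Fin q → ℝ} (ha : IsDist a) :
    -((q : ℝ) ^ 2 * Jmax * MV) ≤ mgse V J a :=
  le_csInf (mgse_set_nonempty ha) (mgse_set_bddBelow hJb hJ0 hMV a)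

lemma mgse_diff (hJb : ∀ i j, |J i j| ≤ Jmax) (hJ0 : 0 ≤ Jmax)
    {U V : ℝ → ℝ → ℝ} (hUm : Measurable (uncurry U)) (hVm : Measurable (uncurry V))
    {MU MV : ℝ} (hMU : ∀ x y, |U x y| ≤ MU) (hMV : ∀ x y, |V x y| ≤ MV)
    {a : Fin q → ℝ} (ha : IsDist a) :
    |mgse U J a - mgse V J a| ≤ (q : ℝ) ^ 2 * Jmax * cutNorm (fun x y => U x y - V x y) := by
  rw [abs_sub_le_iff]
  constructor
  · have := sInf_le_sInf_add (c := (q : ℝ) ^ 2 * Jmax * cutNorm (fun x y => U x y - V x y))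
      (mgse_set_nonempty (V := V) (J := J) ha)
      ⟨_, mgse_set_bddBelow hJb hJ0 hMU a⟩ ?_
    · unfold mgse; linarith
    · rintro e ⟨ρ, hint, rfl⟩
      refine ⟨energy U J ρ, ⟨ρ, hint, rfl⟩, ?_⟩
      have := abs_energy_sub_le hJb hJ0 hUm hVm hMU hMV ρ
      rw [abs_le] at this
      linarith [this.1]
  · have := sInf_le_sInf_add (c := (q : ℝ) ^ 2 * Jmax * cutNorm (fun x y => U x y - V x y))
      (mgse_set_nonempty (V := U) (J := J) ha)
      ⟨_, mgse_set_bddBelow hJb hJ0 hMV a⟩ ?_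
    · unfold mgse; linarith
    · rintro e ⟨ρ, hint, rfl⟩
      refine ⟨energy V J ρ, ⟨ρ, hint, rfl⟩, ?_⟩
      have := abs_energy_sub_le hJb hJ0 hUm hVm hMU hMV ρ
      rw [abs_le] at this
      linarith [this.2]

lemma mgse_comp {W : ℝ → ℝ → ℝ} (hWm : Measurable (uncurry W))
    {φ : ℝ → ℝ} (hφm : Measurable φ) (hbij : Set.BijOn φ I01 I01)
    (hmp : MeasurePreserving φ (volume.restrict I01) (volume.restrict I01))
    (a : Fin q → ℝ) :
    mgse (fun x y => W (φ x) (φ y)) J a = mgse W J a := by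
  obtain ⟨G, hGm, hGI, hGφ⟩ := exists_G hφm hbij
  unfold mgse
  congr 1
  apply Set.eq_of_subset_of_subset
  · -- e = energy Wφ ρ; use σ = ρ ∘ G
    rintro e ⟨ρ, hint, rfl⟩
    refine ⟨⟨fun i x => ρ.toFun i (G x), fun i => (ρ.measurable i).comp hGm,
      fun i x hx => ρ.mem_I01 i (G x) (hGI x hx),
      fun x hx => ρ.sum_one (G x) (hGI x hx)⟩, ?_, ?_⟩
    · intro i
      rw [← hint i]
      have h1 : (∫ x in I01, ρ.toFun i (G (φ x))) = ∫ x in I01, ρ.toFun i (G x) :=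
        setIntegral_comp_mp hφm hmp ((ρ.measurable i).comp hGm)
      have h2 : (∫ x in I01, ρ.toFun i (G (φ x))) = ∫ x in I01, ρ.toFun i x :=
        setIntegral_congr_fun measI (fun x hx => by rw [hGφ x hx])
      rw [← h1, h2]
    · unfold energy
      congr 1
      apply Finset.sum_congr rfl; intro i _
      apply Finset.sum_congr rfl; intro j _
      congr 1
      have hFm : Measurable (uncurry (fun x y => ρ.toFun i (G x) * ρ.toFun j (G y) * W x y)) :=
        ((((ρ.measurable i).comp hGm).comp measurable_fst).mul
          (((ρ.measurable j).comp hGm).comp measurable_snd)).mul hWm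
      have h1 := double_comp hφm hmp hFm
      have h2 : (∫ x in I01, ∫ y in I01,
          ρ.toFun i (G (φ x)) * ρ.toFun j (G (φ y)) * W (φ x) (φ y))
          = ∫ x in I01, ∫ y in I01, ρ.toFun i x * ρ.toFun j y * W (φ x) (φ y) := by
        apply setIntegral_congr_fun measI
        intro x hx
        apply setIntegral_congr_fun measI
        intro y hy
        simp only [hGφ x hx, hGφ y hy]
      rw [← h2, h1]
  · -- e = energy W ρ; use σ = ρ ∘ φ
    rintro e ⟨ρ, hint, rfl⟩
    refine ⟨⟨fun i x => ρ.toFun i (φ x), fun i => (ρ.measurable i).comp hφm,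
      fun i x hx => ρ.mem_I01 i (φ x) (hbij.mapsTo hx),
      fun x hx => ρ.sum_one (φ x) (hbij.mapsTo hx)⟩, ?_, ?_⟩
    · intro i
      rw [← hint i]
      exact setIntegral_comp_mp hφm hmp (ρ.measurable i)
    · unfold energy
      congr 1
      apply Finset.sum_congr rfl; intro i _
      apply Finset.sum_congr rfl; intro j _
      congr 1
      exact (double_comp hφm hmp (measF hWm ρ i j)).symm

end Mgse


section Ltgse

variable {q : ℕ} {J : Matrix (Fin q) (Fin q) ℝ} {Jmax : ℝ}

lemma unif_dist (hq : 1 ≤ q) : IsDist (fun _ : Fin q => 1 / (q : ℝ)) := by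
  have hq0 : 0 < (q : ℝ) := by exact_mod_cast hq
  constructor
  · intro _; positivity
  · rw [Finset.sum_const, Finset.card_univ, Fintype.card_fin, nsmul_eq_mul]
    field_simp

lemma ltgse_diff (hJb : ∀ i j, |J i j| ≤ Jmax) (hJ0 : 0 ≤ Jmax)
    {U V : ℝ → ℝ → ℝ} (hUm : Measurable (uncurry U)) (hVm : Measurable (uncurry V))
    {MU MV : ℝ} (hMU : ∀ x y, |U x y| ≤ MU) (hMV : ∀ x y, |V x y| ≤ MV)
    {c : ℝ} (hq : 1 ≤ q) (hc : c ≤ 1 / q) :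
    |ltgse U J c - ltgse V J c| ≤
      (q : ℝ) ^ 2 * Jmax * cutNorm (fun x y => U x y - V x y) := by
  have ha0 := unif_dist (q := q) hq
  have hSne : ∀ V' : ℝ → ℝ → ℝ, {e | ∃ a : Fin q → ℝ, IsDist a ∧
      (∀ i, (fun _ : Fin q => c) i ≤ a i) ∧ e = mgse V' J a}.Nonempty :=
    fun V' => ⟨mgse V' J (fun _ => 1 / (q : ℝ)), fun _ => 1 / (q : ℝ), ha0,
      fun _ => hc, rfl⟩
  have hSbb : ∀ (V' : ℝ → ℝ → ℝ) (MV' : ℝ), (∀ x y, |V' x y| ≤ MV') →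
      ∀ e ∈ {e | ∃ a : Fin q → ℝ, IsDist a ∧
        (∀ i, (fun _ : Fin q => c) i ≤ a i) ∧ e = mgse V' J a},
        -((q : ℝ) ^ 2 * Jmax * MV') ≤ e := by
    rintro V' MV' hMV' e ⟨a, ha, _, rfl⟩
    exact mgse_ge hJb hJ0 hMV' ha
  rw [abs_sub_le_iff]
  unfold ltgse ltgseV
  constructor
  · have := sInf_le_sInf_add (c := (q : ℝ) ^ 2 * Jmax * cutNorm (fun x y => U x y - V x y))
      (hSne V) ⟨_, hSbb U MU hMU⟩ ?_
    · linarith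
    · rintro e ⟨a, ha, hth, rfl⟩
      refine ⟨mgse U J a, ⟨a, ha, hth, rfl⟩, ?_⟩
      have := mgse_diff hJb hJ0 hUm hVm hMU hMV ha
      rw [abs_le] at this
      linarith [this.1]
  · have := sInf_le_sInf_add (c := (q : ℝ) ^ 2 * Jmax * cutNorm (fun x y => U x y - V x y))
      (hSne U) ⟨_, hSbb V MV hMV⟩ ?_
    · linarith
    · rintro e ⟨a, ha, hth, rfl⟩
      refine ⟨mgse V J a, ⟨a, ha, hth, rfl⟩, ?_⟩
      have := mgse_diff hJb hJ0 hUm hVm hMU hMV ha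
      rw [abs_le] at this
      linarith [this.2]

set_option maxHeartbeats 1000000 in
lemma ltgse_comp {W : ℝ → ℝ → ℝ} (hWm : Measurable (uncurry W))
    {φ : ℝ → ℝ} (hφm : Measurable φ) (hbij : Set.BijOn φ I01 I01)
    (hmp : MeasurePreserving φ (volume.restrict I01) (volume.restrict I01)) (c : ℝ) :
    ltgse (fun x y => W (φ x) (φ y)) J c = ltgse W J c := by
  have hset : ∀ a : Fin q → ℝ, mgse (fun x y => W (φ x) (φ y)) J a = mgse W J a :=
    mgse_comp hWm hφm hbij hmp
  unfold ltgse ltgseV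
  refine congrArg sInf ?_
  ext e
  simp only [Set.mem_setOf_eq, hset]

end Ltgse

end S8

theorem stmt8 (q : ℕ) (hq : 1 ≤ q) (c : ℝ) (hc0 : 0 ≤ c) (hc : c ≤ 1 / q)
    (J : Matrix (Fin q) (Fin q) ℝ) (hJ : J.IsSymm)
    (Jmax : ℝ) (hJb : ∀ i j, |J i j| ≤ Jmax)
    (U W : ℝ → ℝ → ℝ) (hU : IsGraphon U) (hW : IsGraphon W) :
    |ltgse U J c - ltgse W J c| ≤ (q : ℝ) ^ 2 * Jmax * cutDist U W := by
  classical
  obtain ⟨hUm, _, MU, hMU⟩ := hU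
  obtain ⟨hWm, _, MW, hMW⟩ := hW
  have hq0 : 0 < q := hq
  have hJ0 : 0 ≤ Jmax := le_trans (abs_nonneg _) (hJb ⟨0, hq0⟩ ⟨0, hq0⟩)
  have hC0 : (0 : ℝ) ≤ (q : ℝ) ^ 2 * Jmax := by positivity
  set S : Set ℝ := {r | ∃ φ : ℝ → ℝ, Measurable φ ∧ Set.BijOn φ I01 I01 ∧
    MeasurePreserving φ (volume.restrict I01) (volume.restrict I01) ∧
    r = cutNorm (fun x y => U x y - W (φ x) (φ y))} with hSdef
  have key : ∀ r ∈ S, |ltgse U J c - ltgse W J c| ≤ (q : ℝ) ^ 2 * Jmax * r := by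
    rintro r ⟨φ, hφm, hbij, hmp, rfl⟩
    have hVm : Measurable (Function.uncurry (fun x y => W (φ x) (φ y))) := by
      have : Function.uncurry (fun x y => W (φ x) (φ y))
          = Function.uncurry W ∘ (Prod.map φ φ) := rfl
      rw [this]
      exact hWm.comp (hφm.prodMap hφm)
    have hMV : ∀ x y, |(fun x y => W (φ x) (φ y)) x y| ≤ MW := fun x y => hMW _ _
    have h2 := S8.ltgse_diff (J := J) hJb hJ0 hUm hVm hMU hMV hq hc
    rw [S8.ltgse_comp (J := J) hWm hφm hbij hmp c] at h2
    exact h2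
  have hSne : S.Nonempty := by
    refine ⟨cutNorm (fun x y => U x y - W x y), id, measurable_id, ?_, ?_, by simp⟩
    · exact Set.bijOn_id I01
    · exact MeasurePreserving.id _
  by_cases hC : (q : ℝ) ^ 2 * Jmax = 0
  · obtain ⟨r, hr⟩ := hSne
    have h := key r hr
    rw [hC, zero_mul] at h ⊢
    exact h
  · have hCpos : (0 : ℝ) < (q : ℝ) ^ 2 * Jmax := lt_of_le_of_ne hC0 (Ne.symm hC)
    have h1 : |ltgse U J c - ltgse W J c| / ((q : ℝ) ^ 2 * Jmax) ≤ sInf S := by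
      apply le_csInf hSne
      intro r hr
      rw [div_le_iff₀ hCpos, mul_comm]
      exact key r hr
    have h2 : cutDist U W = sInf S := rfl
    rw [h2]
    calc |ltgse U J c - ltgse W J c|
        = (q : ℝ) ^ 2 * Jmax * (|ltgse U J c - ltgse W J c| / ((q : ℝ) ^ 2 * Jmax)) := by
          exact (mul_div_cancel₀ _ (ne_of_gt hCpos)).symm
      _ ≤ (q : ℝ) ^ 2 * Jmax * sInf S := by
          exact mul_le_mul_of_nonneg_left h1 hC0
end
end
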